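/- arXiv:2403.15578 — 9 statements merged into one kernel-verified Lean document; each statement's English description precedes it below -/
import Mathlib

section
/- If A and B are two k-subsets of [2k+r] joined by a path of length 2p (p ≥ 0) in the Kneser graph K(2k+r,k), then |A ∩ B| ≥ k - rp. -/
/-- The Kneser graph: vertices are the `k`-subsets of `[n]`, adjacency is disjointness. -/
def kneserGraph (n k : ℕ) : SimpleGraph {A : Finset (Fin n) // A.card = k} where
  Adj A B := A ≠ B ∧ Disjoint A.1 B.1
  symm := ⟨fun A B h => ⟨h.1.symm, h.2.symm⟩⟩
  loopless := ⟨fun A h => h.1 rfl⟩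

/-- The exact distance-`d` graph of a graph `G`. -/
def exactDistanceGraph {V : Type*} (G : SimpleGraph V) (d : ℕ) : SimpleGraph V where
  Adj A B := A ≠ B ∧ G.dist A B = d
  symm := ⟨fun A B h => ⟨h.1.symm, by rw [SimpleGraph.dist_comm]; exact h.2⟩⟩
  loopless := ⟨fun A h => h.1 rfl⟩

/-- Two `k`-sets disjoint from a common `k`-set `M` in `[2k+r]` intersect in at
least `k - r` elements. -/
lemma aux_common (k r : ℕ) (X Y M : Finset (Fin (2 * k + r)))
    (hX : X.card = k) (hY : Y.card = k) (hM : M.card = k)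
    (h1 : Disjoint X M) (h2 : Disjoint Y M) :
    k ≤ r + (X ∩ Y).card := by
  have hsub : X ∪ Y ⊆ Mᶜ := by
    intro x hx
    rw [Finset.mem_compl]
    rcases Finset.mem_union.mp hx with h | h
    · exact Finset.disjoint_left.mp h1 h
    · exact Finset.disjoint_left.mp h2 h
  have hcompl : (Mᶜ : Finset (Fin (2 * k + r))).card = k + r := by
    rw [Finset.card_compl, hM]
    simp [Fintype.card_fin]
    omega
  have h3 : (X ∪ Y).card ≤ k + r := hcompl ▸ Finset.card_le_card hsub
  have h4 : (X ∪ Y).card + (X ∩ Y).card = X.card + Y.card :=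
    Finset.card_union_add_card_inter X Y
  omega

theorem stmt0 (k r p : ℕ) (hk : 0 < k) (hr : 0 < r)
    (A B : {A : Finset (Fin (2 * k + r)) // A.card = k})
    (hpath : ∃ w : (kneserGraph (2 * k + r) k).Walk A B, w.length = 2 * p) :
    k - r * p ≤ (A.1 ∩ B.1).card := by
  induction p generalizing A B with
  | zero =>
    obtain ⟨w, hw⟩ := hpath
    have hAB : A = B := by
      cases w with
      | nil => rfl
      | cons h w => simp at hw
    subst hAB
    simp [A.2]
  | succ p ih =>
    obtain ⟨w, hw⟩ := hpath
    cases w with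
    | nil => simp at hw
    | @cons _ M _ h1 w1 =>
      cases w1 with
      | nil => simp at hw; omega
      | @cons _ C _ h2 w2 =>
        have hlen : w2.length = 2 * p := by
          simp [SimpleGraph.Walk.length_cons] at hw; omega
        have hCB : k - r * p ≤ (C.1 ∩ B.1).card := ih C B ⟨w2, hlen⟩
        have c2 : k ≤ r + (A.1 ∩ C.1).card :=
          aux_common k r A.1 C.1 M.1 A.2 C.2 M.2 h1.2 h2.2.symm
        have c3 : (C.1 ∩ B.1).card ≤ (A.1 ∩ B.1).card + (C.1 \ A.1).card := by
          have hsub : C.1 ∩ B.1 ⊆ (A.1 ∩ B.1) ∪ (C.1 \ A.1) := by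
            intro x hx
            simp only [Finset.mem_inter, Finset.mem_union, Finset.mem_sdiff] at hx ⊢
            by_cases hxA : x ∈ A.1
            · exact Or.inl ⟨hxA, hx.2⟩
            · exact Or.inr ⟨hx.1, hxA⟩
          calc (C.1 ∩ B.1).card ≤ ((A.1 ∩ B.1) ∪ (C.1 \ A.1)).card :=
                Finset.card_le_card hsub
            _ ≤ _ := Finset.card_union_le _ _
        have c4 : (C.1 \ A.1).card + (C.1 ∩ A.1).card = k := by
          rw [Finset.card_sdiff_add_card_inter, C.2]
        have c5 : (C.1 ∩ A.1).card = (A.1 ∩ C.1).card := by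
          rw [Finset.inter_comm]
        have hmul : r * (p + 1) = r * p + r := by ring
        omega
end

section
/- Let k ≥ 2 and r ≥ k-1 be positive integers. Then the diameter of the Kneser graph K(2k+r,k) equals 2. -/
lemma kneser_edist_le_two (k r : ℕ) (hk : 2 ≤ k) (hrk : k - 1 ≤ r)
    (A B : {A : Finset (Fin (2 * k + r)) // A.card = k}) :
    (kneserGraph (2 * k + r) k).edist A B ≤ 2 := by
  by_cases hAB : A = B
  · subst hAB; simp
  by_cases hdis : Disjoint A.1 B.1
  · calc (kneserGraph (2 * k + r) k).edist A B ≤ 1 :=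
        le_of_eq <| SimpleGraph.edist_eq_one_iff_adj.mpr
          (show (kneserGraph (2 * k + r) k).Adj A B from ⟨hAB, hdis⟩)
      _ ≤ 2 := by norm_num
  -- A and B intersect; find C disjoint from both
  have hne : (A.1 ∩ B.1).Nonempty := Finset.not_disjoint_iff_nonempty_inter.mp hdis
  have hunion : (A.1 ∪ B.1).card ≤ 2 * k - 1 := by
    have := Finset.card_union_add_card_inter A.1 B.1
    have h1 : 1 ≤ (A.1 ∩ B.1).card := Finset.card_pos.mpr hne
    have := A.2; have := B.2
    omega
  have hcompl : k ≤ ((A.1 ∪ B.1)ᶜ : Finset (Fin (2 * k + r))).card := by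
    rw [Finset.card_compl, Fintype.card_fin]
    omega
  obtain ⟨C, hCsub, hCcard⟩ := Finset.exists_subset_card_eq hcompl
  have hCdisA : Disjoint C A.1 := by
    refine Finset.disjoint_left.mpr fun x hx hxA => ?_
    have := hCsub hx
    simp only [Finset.mem_compl, Finset.mem_union] at this
    exact this (Or.inl hxA)
  have hCdisB : Disjoint C B.1 := by
    refine Finset.disjoint_left.mpr fun x hx hxB => ?_
    have := hCsub hx
    simp only [Finset.mem_compl, Finset.mem_union] at this
    exact this (Or.inr hxB)
  set Cv : {A : Finset (Fin (2 * k + r)) // A.card = k} := ⟨C, hCcard⟩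
  obtain ⟨x, hx⟩ := Finset.card_pos.mp (show 0 < A.1.card by rw [A.2]; omega)
  obtain ⟨y, hy⟩ := Finset.card_pos.mp (show 0 < B.1.card by rw [B.2]; omega)
  have hCneA : Cv ≠ A := by
    intro h
    have hCA : C = A.1 := congrArg Subtype.val h
    rw [hCA] at hCdisA
    exact Finset.disjoint_left.mp hCdisA hx hx
  have hCneB : Cv ≠ B := by
    intro h
    have hCB : C = B.1 := congrArg Subtype.val h
    rw [hCB] at hCdisB
    exact Finset.disjoint_left.mp hCdisB hy hy
  have adj1 : (kneserGraph (2 * k + r) k).Adj A Cv := ⟨fun h => hCneA h.symm, hCdisA.symm⟩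
  have adj2 : (kneserGraph (2 * k + r) k).Adj Cv B := ⟨hCneB, hCdisB⟩
  calc (kneserGraph (2 * k + r) k).edist A B
      ≤ (SimpleGraph.Walk.cons adj1 (SimpleGraph.Walk.cons adj2 SimpleGraph.Walk.nil)).length :=
        SimpleGraph.Walk.edist_le _
    _ = 2 := by simp

theorem stmt2 (k r : ℕ) (hk : 2 ≤ k) (hr : 0 < r) (hrk : k - 1 ≤ r) :
    (kneserGraph (2 * k + r) k).diam = 2 := by
  set G := kneserGraph (2 * k + r) k with hG
  have hupper : G.ediam ≤ 2 :=
    SimpleGraph.ediam_le_of_edist_le (fun u v => kneser_edist_le_two k r hk hrk u v)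
  -- construct a pair at distance 2
  have hkn : k ≤ Fintype.card (Fin (2 * k + r)) := by rw [Fintype.card_fin]; omega
  obtain ⟨A, -, hAcard⟩ := Finset.exists_subset_card_eq
    (show k ≤ (Finset.univ : Finset (Fin (2*k+r))).card by
      rw [Finset.card_univ, Fintype.card_fin]; omega)
  obtain ⟨a, ha⟩ := Finset.card_pos.mp (by omega : 0 < A.card)
  have hAne : Aᶜ.Nonempty := by
    rw [← Finset.card_pos, Finset.card_compl, Fintype.card_fin]; omega
  obtain ⟨b, hb⟩ := hAne
  rw [Finset.mem_compl] at hb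
  set B : Finset (Fin (2*k+r)) := insert b (A.erase a) with hBdef
  have hbnotin : b ∉ A.erase a := fun h => hb (Finset.mem_of_mem_erase h)
  have hBcard : B.card = k := by
    rw [hBdef, Finset.card_insert_of_notMem hbnotin, Finset.card_erase_of_mem ha]
    omega
  set Av : {A : Finset (Fin (2*k+r)) // A.card = k} := ⟨A, hAcard⟩
  set Bv : {A : Finset (Fin (2*k+r)) // A.card = k} := ⟨B, hBcard⟩
  have hne : Av ≠ Bv := by
    intro h
    apply hb
    have hAB : A = B := congrArg Subtype.val h
    rw [hAB]
    exact Finset.mem_insert_self _ _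
  have hndis : ¬ Disjoint Av.1 Bv.1 := by
    obtain ⟨c, hc⟩ := Finset.card_pos.mp (by rw [Finset.card_erase_of_mem ha]; omega :
      0 < (A.erase a).card)
    intro hdis
    exact (Finset.disjoint_left.mp hdis (Finset.mem_of_mem_erase hc))
      (Finset.mem_insert_of_mem hc)
  have hnadj : ¬ G.Adj Av Bv := fun h => hndis h.2
  have hle : G.edist Av Bv ≤ 2 := kneser_edist_le_two k r hk hrk Av Bv
  have h0 : G.edist Av Bv ≠ 0 := SimpleGraph.edist_eq_zero_iff.ne.mpr hne
  have h1 : G.edist Av Bv ≠ 1 := fun h => hnadj (SimpleGraph.edist_eq_one_iff_adj.mp h)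
  have h2 : G.edist Av Bv = 2 := by
    have hnt : G.edist Av Bv ≠ ⊤ := fun h => by rw [h] at hle; exact absurd hle (by simp)
    lift G.edist Av Bv to ℕ using hnt with d hd
    have : d ≤ 2 := by exact_mod_cast hle
    have : d ≠ 0 := fun h => h0 (by exact_mod_cast congrArg Nat.cast h)
    have : d ≠ 1 := fun h => h1 (by exact_mod_cast congrArg Nat.cast h)
    have : d = 2 := by omega
    exact_mod_cast congrArg Nat.cast this
  have hediam : G.ediam = 2 := le_antisymm hupper (h2 ▸ SimpleGraph.edist_le_ediam)
  rw [SimpleGraph.diam, hediam]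
  rfl
end

section
/- Let k, r be positive integers with 1 ≤ r < k-1, and let A, B be distinct k-subsets of [2k+r] with |A ∩ B| = s. Then the distance between A and B in the Kneser graph K(2k+r,k) is min{2⌈(k-s)/r⌉, 2⌈s/r⌉ + 1}. -/
namespace KneserAux

open Finset

abbrev V (k r : ℕ) := {A : Finset (Fin (2 * k + r)) // A.card = k}

variable {k r : ℕ}

lemma ceilDiv_zero' (hr : 1 ≤ r) : (0 : ℕ) ⌈/⌉ r = 0 := by
  rw [Nat.ceilDiv_eq_add_pred_div]
  exact Nat.div_eq_of_lt (by omega)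

lemma ceilDiv_le' (hr : 1 ≤ r) {a t : ℕ} (h : a ≤ t * r) : a ⌈/⌉ r ≤ t :=
  (ceilDiv_le_iff_le_mul (by omega : 0 < r)).mpr (by rw [mul_comm]; exact h)

lemma ceilDiv_mono' (hr : 1 ≤ r) {a b : ℕ} (h : a ≤ b) : a ⌈/⌉ r ≤ b ⌈/⌉ r := by
  rw [ceilDiv_le_iff_le_mul (by omega : 0 < r)]
  have := le_smul_ceilDiv (by omega : 0 < r) (b := b)
  simp only [smul_eq_mul] at this
  omega

lemma ceilDiv_succ' (hr : 1 ≤ r) {m : ℕ} (hm : 1 ≤ m) :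
    m ⌈/⌉ r = (m - min r m) ⌈/⌉ r + 1 := by
  rcases le_or_gt m r with h | h
  · rw [min_eq_right h, Nat.sub_self, ceilDiv_zero' hr]
    rw [Nat.ceilDiv_eq_add_pred_div]
    exact Nat.div_eq_of_lt_le (by omega) (by omega)
  · rw [min_eq_left h.le, Nat.ceilDiv_eq_add_pred_div, Nat.ceilDiv_eq_add_pred_div]
    have he : m + r - 1 = (m - r + r - 1) + r := by omega
    rw [he, Nat.add_div_right _ (by omega : 0 < r)]

/-- From `A`, any `A'` with `|A' \ A| ≤ r` is at two steps: there is a common neighbor. -/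
lemma twoStep (hk : 1 ≤ k) (A A' : V k r) (h : (A'.1 \ A.1).card ≤ r) :
    ∃ C : V k r, (kneserGraph (2 * k + r) k).Adj A C ∧
      (kneserGraph (2 * k + r) k).Adj C A' := by
  have hU : (A'.1 ∪ A.1).card ≤ k + r := by
    have := Finset.card_sdiff_add_card A'.1 A.1
    have := A.2
    omega
  have hcompl : k ≤ ((A'.1 ∪ A.1)ᶜ).card := by
    rw [Finset.card_compl, Fintype.card_fin]
    omega
  obtain ⟨C, hC, hCcard⟩ := Finset.exists_subset_card_eq hcompl
  have hdisj : ∀ S, S ⊆ A'.1 ∪ A.1 → Disjoint C S := by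
    intro S hS
    refine Finset.disjoint_left.mpr fun x hxC hxS => ?_
    exact (Finset.mem_compl.mp (hC hxC)) (hS hxS)
  have hdA : Disjoint C A.1 := hdisj _ Finset.subset_union_right
  have hdA' : Disjoint C A'.1 := hdisj _ Finset.subset_union_left
  have hne : ∀ X : V k r, Disjoint C X.1 → (⟨C, hCcard⟩ : V k r) ≠ X := by
    intro X hd he
    have hCX : C = X.1 := congrArg Subtype.val he
    rw [← hCX] at hd
    rw [disjoint_self, Finset.bot_eq_empty] at hd
    rw [hd] at hCcard
    simp at hCcard
    omega
  exact ⟨⟨C, hCcard⟩, ⟨(hne A hdA).symm, hdA.symm⟩, ⟨hne A' hdA', hdA'⟩⟩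

/-- Walks of even length reducing the symmetric difference by `r` per double step. -/
lemma evenWalk (hr : 1 ≤ r) (hk : 1 ≤ k) :
    ∀ m : ℕ, ∀ A B : V k r, (B.1 \ A.1).card = m →
      ∃ p : (kneserGraph (2 * k + r) k).Walk A B, p.length = 2 * (m ⌈/⌉ r) := by
  intro m
  induction m using Nat.strong_induction_on with
  | _ m ih =>
    intro A B hm
    rcases Nat.eq_zero_or_pos m with h0 | hpos
    · subst h0
      have hsub : B.1 ⊆ A.1 := by
        rw [← Finset.sdiff_eq_empty_iff_subset]
        exact Finset.card_eq_zero.mp hm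
      have hAB : A = B :=
        Subtype.ext ((Finset.eq_of_subset_of_card_le hsub (by rw [A.2, B.2])).symm)
      subst hAB
      exact ⟨SimpleGraph.Walk.nil, by simp [ceilDiv_zero' hr]⟩
    · set t := min r m with ht
      have htm : t ≤ m := min_le_right _ _
      have htr : t ≤ r := min_le_left _ _
      have ht1 : 1 ≤ t := le_min hr hpos
      have hmk : m ≤ k := by
        have : (B.1 \ A.1).card ≤ B.1.card := Finset.card_le_card Finset.sdiff_subset
        rw [B.2] at this; omega
      have hABcard : (A.1 \ B.1).card = m := by
        have h1 := Finset.card_inter_add_card_sdiff A.1 B.1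
        have h2 := Finset.card_inter_add_card_sdiff B.1 A.1
        rw [Finset.inter_comm] at h2
        rw [A.2] at h1
        rw [B.2] at h2
        omega
      obtain ⟨D, hD, hDcard⟩ := Finset.exists_subset_card_eq
        (show t ≤ (A.1 \ B.1).card by omega)
      obtain ⟨E, hE, hEcard⟩ := Finset.exists_subset_card_eq
        (show t ≤ (B.1 \ A.1).card by omega)
      have hDA : D ⊆ A.1 := hD.trans Finset.sdiff_subset
      have hEA : Disjoint E A.1 :=
        Finset.disjoint_left.mpr fun x hx hxA => (Finset.mem_sdiff.mp (hE hx)).2 hxA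
      set S : Finset (Fin (2 * k + r)) := (A.1 \ D) ∪ E with hSdef
      have hScard : S.card = k := by
        rw [Finset.card_union_of_disjoint
          ((hEA.mono_right Finset.sdiff_subset).symm), Finset.card_sdiff_of_subset hDA, A.2, hDcard]
        omega
      set A' : V k r := ⟨S, hScard⟩ with hA'
      have hBA' : (B.1 \ S).card = m - t := by
        have hset : B.1 \ S = (B.1 \ A.1) \ E := by
          ext x
          simp only [hSdef, Finset.mem_sdiff, Finset.mem_union, not_or]
          constructor
          · rintro ⟨hxB, h1, h2⟩
            refine ⟨⟨hxB, fun hxA => ?_⟩, h2⟩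
            by_cases hxD : x ∈ D
            · exact (Finset.mem_sdiff.mp (hD hxD)).2 hxB
            · exact h1 ⟨hxA, hxD⟩
          · rintro ⟨⟨hxB, hxA⟩, hxE⟩
            exact ⟨hxB, fun hx => hxA hx.1, hxE⟩
        rw [hset, Finset.card_sdiff_of_subset hE, hm, hEcard]
      have hSA : (S \ A.1).card ≤ r := by
        have hsub : S \ A.1 ⊆ E := by
          intro x hx
          obtain ⟨hxS, hxA⟩ := Finset.mem_sdiff.mp hx
          rcases Finset.mem_union.mp hxS with h | h
          · exact absurd (Finset.mem_sdiff.mp h).1 hxA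
          · exact h
        have := Finset.card_le_card hsub
        omega
      obtain ⟨C, hAC, hCA'⟩ := twoStep hk A A' hSA
      obtain ⟨p', hp'⟩ := ih (m - t) (by omega) A' B hBA'
      refine ⟨SimpleGraph.Walk.cons hAC (SimpleGraph.Walk.cons hCA' p'), ?_⟩
      have hsucc : m ⌈/⌉ r = (m - t) ⌈/⌉ r + 1 := by
        rw [ht]; exact ceilDiv_succ' hr hpos
      rw [SimpleGraph.Walk.length_cons, SimpleGraph.Walk.length_cons, hp', hsucc]
      omega

/-- One step from `A` towards `B`: a neighbor of `A` containing `B \ A`. -/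
lemma oddStart (hk : 1 ≤ k) (A B : V k r) :
    ∃ C : V k r, (kneserGraph (2 * k + r) k).Adj A C ∧
      (B.1 \ C.1).card ≤ (A.1 ∩ B.1).card := by
  have h1 : B.1 \ A.1 ⊆ A.1ᶜ := fun x hx =>
    Finset.mem_compl.mpr (Finset.mem_sdiff.mp hx).2
  have h2 : (B.1 \ A.1).card ≤ k := by
    have : (B.1 \ A.1).card ≤ B.1.card := Finset.card_le_card Finset.sdiff_subset
    rw [B.2] at this; exact this
  have h3 : k ≤ (A.1ᶜ).card := by
    rw [Finset.card_compl, Fintype.card_fin, A.2]; omega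
  obtain ⟨C, hsub, hsub2, hCcard⟩ := Finset.exists_subsuperset_card_eq h1 h2 h3
  have hdisj : Disjoint A.1 C := Finset.disjoint_right.mpr fun x hxC =>
    Finset.mem_compl.mp (hsub2 hxC)
  have hne : A ≠ (⟨C, hCcard⟩ : V k r) := by
    intro he
    have hAC : A.1 = C := congrArg Subtype.val he
    have hd := hdisj
    rw [← hAC] at hd
    rw [disjoint_self, Finset.bot_eq_empty] at hd
    have := A.2
    rw [hd] at this
    simp at this
    omega
  refine ⟨⟨C, hCcard⟩, ⟨hne, hdisj⟩, ?_⟩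
  refine Finset.card_le_card fun x hx => ?_
  obtain ⟨hxB, hxC⟩ := Finset.mem_sdiff.mp hx
  refine Finset.mem_inter.mpr ⟨?_, hxB⟩
  by_contra hxA
  exact hxC (hsub (Finset.mem_sdiff.mpr ⟨hxB, hxA⟩))

/-- Lower bound along any walk. -/
lemma walkBound :
    ∀ {X Y : V k r} (p : (kneserGraph (2 * k + r) k).Walk X Y),
      (Even p.length → k ≤ (X.1 ∩ Y.1).card + (p.length / 2) * r) ∧
      (Odd p.length → (X.1 ∩ Y.1).card ≤ (p.length / 2) * r) := by
  intro X Y p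
  induction p with
  | nil =>
    rename_i u
    constructor
    · intro _
      simp only [SimpleGraph.Walk.length_nil, Nat.zero_div, Nat.zero_mul, Finset.inter_self]
      rw [u.2]
      omega
    · intro h
      simp [Nat.odd_iff] at h
  | @cons u v w hadj q ih =>
    obtain ⟨hne, hdisj⟩ := id hadj
    have hXY_le : (u.1 ∩ w.1).card + (v.1 ∩ w.1).card ≤ k := by
      have hd : Disjoint (u.1 ∩ w.1) (v.1 ∩ w.1) :=
        hdisj.mono Finset.inter_subset_left Finset.inter_subset_left
      have hc : ((u.1 ∩ w.1) ∪ (v.1 ∩ w.1)).card ≤ w.1.card :=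
        Finset.card_le_card
          (Finset.union_subset Finset.inter_subset_right Finset.inter_subset_right)
      rw [Finset.card_union_of_disjoint hd, w.2] at hc
      exact hc
    have hXY_ge : k ≤ (u.1 ∩ w.1).card + (v.1 ∩ w.1).card + r := by
      have h1 : w.1 \ (u.1 ∪ v.1) ⊆ (u.1 ∪ v.1)ᶜ := fun x hx =>
        Finset.mem_compl.mpr (Finset.mem_sdiff.mp hx).2
      have h2 : ((u.1 ∪ v.1)ᶜ).card = r := by
        rw [Finset.card_compl, Fintype.card_fin,
          Finset.card_union_of_disjoint hdisj, u.2, v.2]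
        omega
      have h5 : (w.1 \ (u.1 ∪ v.1)).card ≤ r :=
        le_trans (Finset.card_le_card h1) (le_of_eq h2)
      have h4 := Finset.card_inter_add_card_sdiff w.1 (u.1 ∪ v.1)
      have hd2 : Disjoint (w.1 ∩ u.1) (w.1 ∩ v.1) :=
        hdisj.mono Finset.inter_subset_right Finset.inter_subset_right
      have h3 : (w.1 ∩ (u.1 ∪ v.1)).card = (u.1 ∩ w.1).card + (v.1 ∩ w.1).card := by
        rw [Finset.inter_union_distrib_left, Finset.card_union_of_disjoint hd2,
          Finset.inter_comm w.1 u.1, Finset.inter_comm w.1 v.1]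
      rw [w.2] at h4
      omega
    rw [SimpleGraph.Walk.length_cons]
    rcases Nat.even_or_odd q.length with he | ho
    · have hq := ih.1 he
      rw [Nat.even_iff] at he
      have hdiv : (q.length + 1) / 2 = q.length / 2 := by omega
      constructor
      · intro hev
        rw [Nat.even_iff] at hev
        omega
      · intro _
        rw [hdiv]
        omega
    · have hq := ih.2 ho
      rw [Nat.odd_iff] at ho
      have hdiv : (q.length + 1) / 2 = q.length / 2 + 1 := by omega
      have hmul : (q.length / 2 + 1) * r = (q.length / 2) * r + r := by ring
      constructor
      · intro _
        rw [hdiv, hmul]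
        omega
      · intro hodd
        rw [Nat.odd_iff] at hodd
        omega

end KneserAux

theorem stmt3 (k r s : ℕ) (hr : 1 ≤ r) (hrk : r < k - 1)
    (A B : {A : Finset (Fin (2 * k + r)) // A.card = k}) (hAB : A ≠ B)
    (hs : (A.1 ∩ B.1).card = s) :
    (kneserGraph (2 * k + r) k).dist A B
      = min (2 * ((k - s) ⌈/⌉ r)) (2 * (s ⌈/⌉ r) + 1) := by
  classical
  have hk : 1 ≤ k := by omega
  have hBA : (B.1 \ A.1).card = k - s := by
    have h2 := Finset.card_inter_add_card_sdiff B.1 A.1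
    rw [Finset.inter_comm] at h2
    rw [B.2, hs] at h2
    omega
  obtain ⟨p, hp⟩ := KneserAux.evenWalk hr hk (k - s) A B hBA
  have hub1 : (kneserGraph (2 * k + r) k).dist A B ≤ 2 * ((k - s) ⌈/⌉ r) := hp ▸ SimpleGraph.dist_le p
  obtain ⟨C, hAC, hBC⟩ := KneserAux.oddStart hk A B
  obtain ⟨q, hq⟩ := KneserAux.evenWalk hr hk ((B.1 \ C.1).card) C B rfl
  have hub2 : (kneserGraph (2 * k + r) k).dist A B ≤ 2 * (s ⌈/⌉ r) + 1 := by
    have h1 := SimpleGraph.dist_le (SimpleGraph.Walk.cons hAC q)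
    rw [SimpleGraph.Walk.length_cons, hq] at h1
    have hmono : (B.1 \ C.1).card ⌈/⌉ r ≤ s ⌈/⌉ r :=
      KneserAux.ceilDiv_mono' hr (hs ▸ hBC)
    omega
  have hreach : (kneserGraph (2 * k + r) k).Reachable A B := p.reachable
  obtain ⟨w, hw⟩ := hreach.exists_walk_length_eq_dist
  have hlb := KneserAux.walkBound w
  set d := (kneserGraph (2 * k + r) k).dist A B with hd
  rcases Nat.even_or_odd d with he | ho
  · have h1 := hlb.1 (by rw [hw]; exact he)
    rw [hw, hs] at h1
    have h2 : (k - s) ⌈/⌉ r ≤ d / 2 := KneserAux.ceilDiv_le' hr (by omega)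
    rw [Nat.even_iff] at he
    omega
  · have h1 := hlb.2 (by rw [hw]; exact ho)
    rw [hw, hs] at h1
    have h2 : s ⌈/⌉ r ≤ d / 2 := KneserAux.ceilDiv_le' hr h1
    rw [Nat.odd_iff] at ho
    omega
end

section
/- Let k and r be positive integers. Then the diameter of the Kneser graph K(2k+r,k) equals ⌈(k-1)/r⌉ + 1. -/
open Finset

variable {k r : ℕ}




lemma kg_adj {n k : ℕ} {A B : {A : Finset (Fin n) // A.card = k}} :
    (kneserGraph n k).Adj A B ↔ A ≠ B ∧ Disjoint A.1 B.1 := Iff.rfl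

lemma keyIneq (A C C' : Finset (Fin (2 * k + r))) (hA : A.card = k) (hC : C.card = k)
    (hC' : C'.card = k) (hd : Disjoint C C') :
    k ≤ (A ∩ C).card + (A ∩ C').card + r := by
  have h1 : A ⊆ (A ∩ C) ∪ (A ∩ C') ∪ (A \ (C ∪ C')) := by
    intro x hx
    simp only [mem_union, mem_inter, mem_sdiff]
    by_cases h : x ∈ C ∪ C'
    · simp only [mem_union] at h; tauto
    · tauto
  have h2 : (A \ (C ∪ C')).card ≤ r := by
    have hsub : A \ (C ∪ C') ⊆ (C ∪ C')ᶜ := by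
      intro x hx; simp only [mem_sdiff] at hx; simpa using hx.2
    have := card_le_card hsub
    rwa [card_compl, Fintype.card_fin, card_union_of_disjoint hd, hC, hC',
      show 2 * k + r - (k + k) = r by omega] at this
  calc k = A.card := hA.symm
    _ ≤ ((A ∩ C) ∪ (A ∩ C') ∪ (A \ (C ∪ C'))).card := card_le_card h1
    _ ≤ (A ∩ C).card + (A ∩ C').card + (A \ (C ∪ C')).card := by
        refine le_trans (card_union_le _ _) ?_
        exact Nat.add_le_add_right (card_union_le _ _) _
    _ ≤ (A ∩ C).card + (A ∩ C').card + r := by omega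

lemma oddStep (A C C' : Finset (Fin (2 * k + r))) (hA : A.card = k) (hd : Disjoint C C') :
    (A ∩ C).card + (A ∩ C').card ≤ k := by
  have hdis : Disjoint (A ∩ C) (A ∩ C') :=
    hd.mono inter_subset_right inter_subset_right
  calc (A ∩ C).card + (A ∩ C').card = ((A ∩ C) ∪ (A ∩ C')).card :=
        (card_union_of_disjoint hdis).symm
    _ ≤ A.card := card_le_card (union_subset inter_subset_left inter_subset_left)
    _ = k := hA

lemma walk_bound :
    ∀ {C D : {S : Finset (Fin (2 * k + r)) // S.card = k}}
      (p : (kneserGraph (2 * k + r) k).Walk C D) (u : ℕ),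
      (p.length = 2 * u → k ≤ (D.1 ∩ C.1).card + u * r) ∧
      (p.length = 2 * u + 1 → (D.1 ∩ C.1).card ≤ u * r) := by
  intro C D p
  induction p with
  | nil =>
    rename_i X
    intro u
    refine ⟨fun _ => ?_, fun h => by simp at h⟩
    rw [inter_self, X.2]
    omega
  | cons h p ih =>
    rename_i C C' D
    intro u
    have hd : Disjoint C.1 C'.1 := h.2
    constructor
    · intro hlen
      simp only [SimpleGraph.Walk.length_cons] at hlen
      obtain ⟨v, rfl⟩ : ∃ v, u = v + 1 := ⟨u - 1, by omega⟩
      have hodd := (ih v).2 (by omega)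
      have hkey := keyIneq D.1 C.1 C'.1 D.2 C.2 C'.2 hd
      have hmr : (v + 1) * r = v * r + r := by ring
      omega
    · intro hlen
      simp only [SimpleGraph.Walk.length_cons] at hlen
      have heven := (ih u).1 (by omega)
      have hstep := oddStep D.1 C.1 C'.1 D.2 hd
      omega
abbrev KV (k r : ℕ) := {S : Finset (Fin (2 * k + r)) // S.card = k}

lemma ne_of_disj (hk : 0 < k) {A C : KV k r} (hd : Disjoint A.1 C.1) : A ≠ C := by
  intro h
  subst h
  rw [disjoint_self] at hd
  have := A.2
  rw [hd] at this
  simp at this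
  omega

lemma compl_card_big (S : Finset (Fin (2 * k + r))) : Sᶜ.card = 2 * k + r - S.card := by
  rw [card_compl, Fintype.card_fin]

lemma step_even (hk : 0 < k) {A B : KV k r} (h : (A.1 ∩ B.1).card < k) :
    ∃ C A'' : KV k r, (kneserGraph (2 * k + r) k).Adj A C ∧
      (kneserGraph (2 * k + r) k).Adj C A'' ∧
      min k ((A.1 ∩ B.1).card + r) ≤ (A''.1 ∩ B.1).card := by
  set s := (A.1 ∩ B.1).card with hs
  have hBA : (B.1 \ A.1).card = k - s := by
    have := card_inter_add_card_sdiff B.1 A.1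
    rw [inter_comm] at this
    omega
  obtain ⟨T, hTsub, hTcard⟩ : ∃ T ⊆ B.1 \ A.1, T.card = min r (k - s) :=
    exists_subset_card_eq (by omega)
  have hTA : Disjoint T A.1 :=
    Finset.disjoint_left.mpr fun x hx => (mem_sdiff.mp (hTsub hx)).2
  have hbase : ((A.1 ∩ B.1) ∪ T).card = s + T.card := by
    rw [card_union_of_disjoint (hTA.mono_right inter_subset_left).symm]
  have hAT : (A.1 ∪ T).card = k + T.card := by
    rw [union_comm, card_union_of_disjoint hTA, A.2]
    omega
  obtain ⟨Af, h1, h2, h3⟩ : ∃ Af, (A.1 ∩ B.1) ∪ T ⊆ Af ∧ Af ⊆ A.1 ∪ T ∧ Af.card = k := by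
    refine exists_subsuperset_card_eq
      (union_subset (inter_subset_left.trans subset_union_left) subset_union_right)
      (by omega) (by omega)
  obtain ⟨Cs, hCsub, hCcard⟩ : ∃ Cs ⊆ (A.1 ∪ T)ᶜ, Cs.card = k := by
    refine exists_subset_card_eq ?_
    rw [compl_card_big, hAT]
    omega
  have hdisjAC : Disjoint A.1 Cs :=
    Finset.disjoint_left.mpr fun x hx hxc => by
      have := hCsub hxc
      simp only [mem_compl, mem_union] at this
      exact this (Or.inl hx)
  have hdisjCA : Disjoint Cs Af :=
    Finset.disjoint_left.mpr fun x hx hxa => by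
      have := hCsub hx
      simp only [mem_compl, mem_union] at this
      have := h2 hxa
      simp only [mem_union] at this
      tauto
  refine ⟨⟨Cs, hCcard⟩, ⟨Af, h3⟩, ⟨ne_of_disj hk hdisjAC, hdisjAC⟩,
    ⟨ne_of_disj hk hdisjCA, hdisjCA⟩, ?_⟩
  show min k (s + r) ≤ (Af ∩ B.1).card
  have hsubB : (A.1 ∩ B.1) ∪ T ⊆ Af ∩ B.1 := by
    refine subset_inter h1 (union_subset inter_subset_right ?_)
    exact hTsub.trans sdiff_subset
  have := card_le_card hsubB
  rw [hbase] at this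
  omega

lemma exists_D (hk : 0 < k) (A B : KV k r) :
    ∃ D : KV k r, (kneserGraph (2 * k + r) k).Adj D B ∧
      k ≤ (A.1 ∩ D.1).card + (A.1 ∩ B.1).card := by
  have hAB : (A.1 \ B.1).card = k - (A.1 ∩ B.1).card := by
    have := card_inter_add_card_sdiff A.1 B.1
    omega
  obtain ⟨Df, h1, h2, h3⟩ : ∃ Df, A.1 \ B.1 ⊆ Df ∧ Df ⊆ B.1ᶜ ∧ Df.card = k := by
    refine exists_subsuperset_card_eq (fun x hx => ?_) (by omega) ?_
    · simpa using (mem_sdiff.mp hx).2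
    · rw [compl_card_big, B.2]; omega
  have hdisj : Disjoint Df B.1 :=
    Finset.disjoint_left.mpr fun x hx => by simpa using h2 hx
  refine ⟨⟨Df, h3⟩, ⟨ne_of_disj hk hdisj, hdisj⟩, ?_⟩
  show k ≤ (A.1 ∩ Df).card + (A.1 ∩ B.1).card
  have : A.1 \ B.1 ⊆ A.1 ∩ Df := subset_inter sdiff_subset h1
  have := card_le_card this
  have hle : (A.1 ∩ B.1).card ≤ k := by
    have h5 := card_le_card (inter_subset_left : A.1 ∩ B.1 ⊆ A.1)
    rwa [A.2] at h5
  omega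
lemma walk_even (hk : 0 < k) (m : ℕ) :
    ∀ A B : KV k r, k ≤ (A.1 ∩ B.1).card + m * r →
      ∃ w : (kneserGraph (2 * k + r) k).Walk A B, w.length ≤ 2 * m := by
  induction m with
  | zero =>
    intro A B hle
    have hAeqB : A = B := by
      have hsub : A.1 ∩ B.1 ⊆ A.1 := inter_subset_left
      have h1 : A.1 ∩ B.1 = A.1 :=
        eq_of_subset_of_card_le hsub (by rw [A.2]; omega)
      have h2 : A.1 ⊆ B.1 := by rw [← h1]; exact inter_subset_right
      exact Subtype.ext (eq_of_subset_of_card_le h2 (by rw [A.2, B.2]))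
    subst hAeqB
    exact ⟨SimpleGraph.Walk.nil, by simp⟩
  | succ m ih =>
    intro A B hle
    by_cases hcase : k ≤ (A.1 ∩ B.1).card + m * r
    · obtain ⟨w, hw⟩ := ih A B hcase
      exact ⟨w, by omega⟩
    · have hs : (A.1 ∩ B.1).card < k := by
        push_neg at hcase
        have : 0 ≤ m * r := Nat.zero_le _
        omega
      obtain ⟨C, A'', hAC, hCA, hmin⟩ := step_even hk hs
      have hnext : k ≤ (A''.1 ∩ B.1).card + m * r := by
        have hmr : (m + 1) * r = m * r + r := by ring
        rcases le_total k ((A.1 ∩ B.1).card + r) with hmn | hmn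
        · rw [min_eq_left hmn] at hmin; omega
        · rw [min_eq_right hmn] at hmin; omega
      obtain ⟨w, hw⟩ := ih A'' B hnext
      refine ⟨SimpleGraph.Walk.cons hAC (SimpleGraph.Walk.cons hCA w), ?_⟩
      simp only [SimpleGraph.Walk.length_cons]
      omega

lemma walk_odd (hk : 0 < k) (m : ℕ) (A B : KV k r)
    (h : (A.1 ∩ B.1).card ≤ m * r) :
    ∃ w : (kneserGraph (2 * k + r) k).Walk A B, w.length ≤ 2 * m + 1 := by
  obtain ⟨D, hDB, hD⟩ := exists_D hk A B
  obtain ⟨w, hw⟩ := walk_even hk m A D (by omega)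
  refine ⟨w.concat hDB, ?_⟩
  rw [SimpleGraph.Walk.length_concat]
  omega

lemma walk_upper (hk : 0 < k) (hr : 0 < r) (A B : KV k r) :
    ∃ w : (kneserGraph (2 * k + r) k).Walk A B, w.length ≤ (k - 1) ⌈/⌉ r + 1 := by
  set q := (k - 1) ⌈/⌉ r with hq
  have hkq : k - 1 ≤ r * q := le_smul_ceilDiv hr
  by_cases hcase : k ≤ (A.1 ∩ B.1).card + ((q + 1) / 2) * r
  · obtain ⟨w, hw⟩ := walk_even hk ((q + 1) / 2) A B hcase
    exact ⟨w, by omega⟩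
  · have hodd : (A.1 ∩ B.1).card ≤ (q / 2) * r := by
      by_contra hcon
      push_neg at hcase hcon
      have hsplit : (q / 2) * r + ((q + 1) / 2) * r = q * r := by
        rw [← Nat.add_mul]
        congr 1
        omega
      have : q * r = r * q := Nat.mul_comm _ _
      omega
    obtain ⟨w, hw⟩ := walk_odd hk (q / 2) A B hodd
    exact ⟨w, by omega⟩
lemma exists_pair (hk : 0 < k) (hr : 0 < r) :
    ∃ A B : KV k r, ∀ p : (kneserGraph (2 * k + r) k).Walk A B,
      (k - 1) ⌈/⌉ r + 1 ≤ p.length := by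
  set q := (k - 1) ⌈/⌉ r with hq
  have hkq : k - 1 ≤ r * q := le_smul_ceilDiv hr
  by_cases hk1 : k = 1
  · subst hk1
    have hq0 : q = 0 := by simp [hq]
    refine ⟨⟨{⟨0, by omega⟩}, card_singleton _⟩, ⟨{⟨1, by omega⟩}, card_singleton _⟩,
      fun p => ?_⟩
    have hne : ({⟨0, by omega⟩} : Finset (Fin (2 * 1 + r))) ≠ {⟨1, by omega⟩} := by
      simp [Finset.singleton_inj, Fin.ext_iff]
    by_contra hcon
    push_neg at hcon
    have hlen : p.length = 0 := by omega
    have := p.eq_of_length_eq_zero hlen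
    exact hne (congrArg Subtype.val this)
  · have hk2 : 2 ≤ k := by omega
    have hq1 : 1 ≤ q := by
      rcases Nat.eq_zero_or_pos q with h0 | h; · rw [h0] at hkq; omega
      · exact h
    have hF2 : r * (q - 1) < k - 1 := by
      by_contra hcon
      push_neg at hcon
      have := (ceilDiv_le_iff_le_mul hr).mpr hcon
      rw [← hq] at this
      omega
    set s₀ := ((q - 1) / 2) * r + 1 with hs₀
    have hkey : s₀ + (q / 2) * r ≤ k - 1 := by
      have hsplit : (q - 1) / 2 + q / 2 = q - 1 := by omega
      have : ((q - 1) / 2) * r + (q / 2) * r = (q - 1) * r := by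
        rw [← Nat.add_mul, hsplit]
      have hcomm : (q - 1) * r = r * (q - 1) := Nat.mul_comm _ _
      omega
    have hs₀k : s₀ ≤ k := by omega
    obtain ⟨Aset, -, hA⟩ : ∃ t ⊆ (univ : Finset (Fin (2 * k + r))), t.card = k :=
      exists_subset_card_eq (by rw [card_univ, Fintype.card_fin]; omega)
    obtain ⟨S, hSsub, hScard⟩ : ∃ S ⊆ Aset, S.card = s₀ :=
      exists_subset_card_eq (by omega)
    obtain ⟨Bf, hB1, hB2, hB3⟩ : ∃ Bf, S ⊆ Bf ∧ Bf ⊆ S ∪ Asetᶜ ∧ Bf.card = k := by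
      refine exists_subsuperset_card_eq subset_union_left (by omega) ?_
      have hdisjS : Disjoint S Asetᶜ := by
        refine Finset.disjoint_left.mpr fun x hx hxc => ?_
        exact (mem_compl.mp hxc) (hSsub hx)
      rw [card_union_of_disjoint hdisjS, compl_card_big, hA, hScard]
      omega
    have hint : (Aset ∩ Bf).card = s₀ := by
      have h1 : Aset ∩ Bf = S := by
        apply subset_antisymm
        · intro x hx
          rw [mem_inter] at hx
          rcases mem_union.mp (hB2 hx.2) with h | h
          · exact h
          · exact absurd hx.1 (mem_compl.mp h)
        · exact subset_inter hSsub hB1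
      rw [h1, hScard]
    refine ⟨⟨Aset, hA⟩, ⟨Bf, hB3⟩, fun p => ?_⟩
    by_contra hcon
    push_neg at hcon
    have hlen : p.length ≤ q := by omega
    rcases Nat.even_or_odd p.length with ⟨u, hu⟩ | ⟨u, hu⟩
    · have hbnd := (walk_bound p u).1 (by omega)
      have hBA : ((⟨Bf, hB3⟩ : KV k r).1 ∩ (⟨Aset, hA⟩ : KV k r).1).card = s₀ := by
        show (Bf ∩ Aset).card = s₀
        rw [inter_comm]; exact hint
      rw [hBA] at hbnd
      have hu2 : u ≤ q / 2 := by omega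
      have := Nat.mul_le_mul_right r hu2
      omega
    · have hbnd := (walk_bound p u).2 (by omega)
      have hBA : ((⟨Bf, hB3⟩ : KV k r).1 ∩ (⟨Aset, hA⟩ : KV k r).1).card = s₀ := by
        show (Bf ∩ Aset).card = s₀
        rw [inter_comm]; exact hint
      rw [hBA] at hbnd
      have hu2 : u ≤ (q - 1) / 2 := by omega
      have := Nat.mul_le_mul_right r hu2
      omega
theorem stmt4 (k r : ℕ) (hk : 0 < k) (hr : 0 < r) :
    (kneserGraph (2 * k + r) k).diam = (k - 1) ⌈/⌉ r + 1 := by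
  set G := kneserGraph (2 * k + r) k with hG
  set q := (k - 1) ⌈/⌉ r with hq
  have hup : ∀ A B : KV k r, G.edist A B ≤ ((q + 1 : ℕ) : ℕ∞) := by
    intro A B
    obtain ⟨w, hw⟩ := walk_upper hk hr A B
    exact le_trans (SimpleGraph.edist_le w) (Nat.cast_le.mpr hw)
  have h1 : G.ediam ≤ ((q + 1 : ℕ) : ℕ∞) := SimpleGraph.ediam_le_of_edist_le hup
  obtain ⟨A, B, hAB⟩ := exists_pair hk hr
  have hne : G.edist A B ≠ ⊤ := by
    intro h
    have := hup A B
    rw [h, top_le_iff] at this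
    exact ENat.coe_ne_top _ this
  obtain ⟨p, hp⟩ := SimpleGraph.exists_walk_of_edist_ne_top hne
  have h2 : ((q + 1 : ℕ) : ℕ∞) ≤ G.ediam := by
    refine le_trans ?_ (SimpleGraph.edist_le_ediam (u := A) (v := B))
    rw [← hp]
    exact Nat.cast_le.mpr (hAB p)
  have hEd : G.ediam = ((q + 1 : ℕ) : ℕ∞) := le_antisymm h1 h2
  rw [SimpleGraph.diam, hEd, ENat.toNat_coe]
end

section
/- Let k ≥ 2 and 1 ≤ r < k-1 be integers with r not dividing k-1, and suppose diam(K(2k+r,k)) = 2p for some p ≥ 1. Then two k-subsets A, B of [2k+r] are at distance exactly 2p in K(2k+r,k) if and only if rp - r + 1 ≤ |A ∩ B| ≤ k - rp + r - 1. -/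
open Finset SimpleGraph

private lemma kneser_adj {n k : ℕ} (hk : 1 ≤ k) {A C : {A : Finset (Fin n) // A.card = k}}
    (h : Disjoint A.1 C.1) : (kneserGraph n k).Adj A C := by
  refine (⟨fun he => ?_, h⟩ : A ≠ C ∧ Disjoint A.1 C.1)
  subst he
  rw [disjoint_self] at h
  have := A.2
  rw [h] at this
  simp at this
  omega

private lemma card_inter_add_ge {k r : ℕ} {A C B : Finset (Fin (2 * k + r))}
    (hAC : Disjoint A C) (hA : A.card = k) (hC : C.card = k) (hB : B.card = k) :
    k ≤ (A ∩ B).card + (C ∩ B).card + r := by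
  have hsub : B ⊆ (A ∩ B) ∪ (C ∩ B) ∪ ((A ∪ C)ᶜ) := by
    intro x hx
    simp only [mem_union, mem_inter, mem_compl]
    by_cases hA' : x ∈ A
    · tauto
    by_cases hC' : x ∈ C <;> tauto
  have h1 := card_le_card hsub
  have h2 := card_union_le ((A ∩ B) ∪ (C ∩ B)) ((A ∪ C)ᶜ)
  have h3 := card_union_le (A ∩ B) (C ∩ B)
  have hU : (A ∪ C).card = 2 * k := by
    rw [card_union_of_disjoint hAC, hA, hC]; ring
  have h4 : ((A ∪ C)ᶜ).card = r := by
    rw [card_compl, hU, Fintype.card_fin]; omega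
  omega

private lemma card_inter_add_le {n k : ℕ} {A C B : Finset (Fin n)}
    (hAC : Disjoint A C) (hB : B.card = k) :
    (A ∩ B).card + (C ∩ B).card ≤ k := by
  have hd : Disjoint (A ∩ B) (C ∩ B) := hAC.mono inter_subset_left inter_subset_left
  have hsub : (A ∩ B) ∪ (C ∩ B) ⊆ B := union_subset inter_subset_right inter_subset_right
  have hle := card_le_card hsub
  rw [card_union_of_disjoint hd] at hle
  omega

/-- Lower bound: along a walk of length `2m` the endpoints intersect in `≥ k - rm` points,
and along a walk of length `2m+1` in `≤ rm` points. -/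
private lemma walk_lower {k r : ℕ} {A B : {A : Finset (Fin (2 * k + r)) // A.card = k}}
    (w : (kneserGraph (2 * k + r) k).Walk A B) (m : ℕ) :
    (w.length = 2 * m → k ≤ (A.1 ∩ B.1).card + r * m) ∧
    (w.length = 2 * m + 1 → (A.1 ∩ B.1).card ≤ r * m) := by
  induction w generalizing m with
  | nil =>
    rename_i u
    constructor
    · intro _
      have h2 : (u.1 ∩ u.1).card = k := by rw [inter_self]; exact u.2
      omega
    · intro h
      simp at h
  | cons hadj w' ih =>
    rename_i u v b
    constructor
    · intro hm
      simp only [Walk.length_cons] at hm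
      obtain ⟨m', rfl⟩ : ∃ m', m = m' + 1 := ⟨m - 1, by omega⟩
      have h1 := (ih m').2 (by omega)
      have h2 := card_inter_add_ge (hadj : u ≠ v ∧ Disjoint u.1 v.1).2 u.2 v.2 b.2
      have h3 : r * (m' + 1) = r * m' + r := Nat.mul_succ r m'
      omega
    · intro hm
      simp only [Walk.length_cons] at hm
      have h1 := (ih m).1 (by omega)
      have h2 := card_inter_add_le (hadj : u ≠ v ∧ Disjoint u.1 v.1).2 b.2
      omega

/-- Upper bound, even case: if `|A ∩ B| ≥ k - rm` then there is a walk of length `≤ 2m`. -/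
private lemma walk_upper_even {k r : ℕ} (hk : 1 ≤ k) (hr : 1 ≤ r) :
    ∀ m : ℕ, ∀ A B : {A : Finset (Fin (2 * k + r)) // A.card = k},
      k ≤ (A.1 ∩ B.1).card + r * m →
      ∃ w : (kneserGraph (2 * k + r) k).Walk A B, w.length ≤ 2 * m := by
  intro m
  induction m with
  | zero =>
    intro A B hAB
    have hss : A.1 ∩ B.1 ⊆ A.1 := inter_subset_left
    have h1 : (A.1 ∩ B.1).card ≤ k := by
      have := card_le_card hss
      rwa [A.2] at this
    have h2 : A.1 ∩ B.1 = A.1 := eq_of_subset_of_card_le hss (by rw [A.2]; omega)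
    have h3 : A.1 ⊆ B.1 := h2 ▸ inter_subset_right
    have h4 : A = B := Subtype.ext (eq_of_subset_of_card_le h3 (by rw [A.2, B.2]))
    subst h4
    exact ⟨Walk.nil, by simp⟩
  | succ m ih =>
    intro A B hAB
    by_cases h0 : k ≤ (A.1 ∩ B.1).card + r * m
    · obtain ⟨w, hw⟩ := ih A B h0
      exact ⟨w, by omega⟩
    have hmulsucc : r * (m + 1) = r * m + r := Nat.mul_succ r m
    have hcompl : (A.1ᶜ).card = k + r := by
      rw [card_compl, A.2, Fintype.card_fin]; omega
    have hU : (A.1 ∪ B.1).card + (A.1 ∩ B.1).card = 2 * k := by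
      rw [card_union_add_card_inter, A.2, B.2]; ring
    have hUle : (A.1 ∪ B.1).card ≤ 2 * k + r := by
      have := card_le_card (subset_univ (A.1 ∪ B.1))
      rwa [card_univ, Fintype.card_fin] at this
    have hC1 : (A.1ᶜ \ B.1).card = r + (A.1 ∩ B.1).card := by
      have he : A.1ᶜ \ B.1 = (A.1 ∪ B.1)ᶜ := by
        ext x; simp [mem_sdiff, mem_compl, mem_union]
      rw [he, card_compl, Fintype.card_fin]
      omega
    by_cases hbig : k ≤ (A.1ᶜ \ B.1).card
    · obtain ⟨C, hCsub, hCcard⟩ := exists_subset_card_eq hbig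
      have hdAC : Disjoint A.1 C := disjoint_left.mpr fun {x} hx hxC => by
        have := hCsub hxC
        rw [mem_sdiff, mem_compl] at this
        exact this.1 hx
      have hdCB : Disjoint C B.1 := disjoint_left.mpr fun {x} hxC hx => by
        have := hCsub hxC
        rw [mem_sdiff] at this
        exact this.2 hx
      refine ⟨Walk.cons (kneser_adj (A := A) (C := ⟨C, hCcard⟩) hk hdAC)
        (Walk.cons (kneser_adj (A := ⟨C, hCcard⟩) (C := B) hk hdCB) Walk.nil), ?_⟩
      simp only [Walk.length_cons, Walk.length_nil]
      omega
    · obtain ⟨C, hC1sub, hCsub, hCcard⟩ :=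
        exists_subsuperset_card_eq (sdiff_subset : A.1ᶜ \ B.1 ⊆ A.1ᶜ)
          (le_of_lt (lt_of_not_ge hbig)) (by rw [hcompl]; omega)
      have hdAC : Disjoint A.1 C := disjoint_left.mpr fun {x} hx hxC => by
        have := hCsub hxC
        rw [mem_compl] at this
        exact this hx
      have hCsd : C \ B.1 = A.1ᶜ \ B.1 := by
        apply Finset.Subset.antisymm
        · intro x hx
          rw [mem_sdiff] at hx ⊢
          exact ⟨hCsub hx.1, hx.2⟩
        · intro x hx
          rw [mem_sdiff] at hx ⊢
          exact ⟨hC1sub (mem_sdiff.mpr hx), hx.2⟩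
      have hCB : (C ∩ B.1).card + (C \ B.1).card = k := by
        rw [card_inter_add_card_sdiff]; exact hCcard
      have hBC : (B.1 ∩ C).card + (B.1 \ C).card = k := by
        rw [card_inter_add_card_sdiff]; exact B.2
      have hBCi : (B.1 ∩ C).card = (C ∩ B.1).card := by rw [inter_comm]
      have hcomplC : (Cᶜ).card = k + r := by
        rw [card_compl, hCcard, Fintype.card_fin]; omega
      have hBCsub : B.1 \ C ⊆ Cᶜ := fun x hx => mem_compl.mpr (mem_sdiff.mp hx).2
      obtain ⟨D, hD1, hD2, hDcard⟩ := exists_subsuperset_card_eq (n := k) hBCsub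
        (by omega) (by rw [hcomplC]; omega)
      have hdCD : Disjoint C D := disjoint_left.mpr fun {x} hx hxD => by
        have := hD2 hxD
        rw [mem_compl] at this
        exact this hx
      have hCsd' : (C \ B.1).card = (A.1ᶜ \ B.1).card := by rw [hCsd]
      have hDB : r + (A.1 ∩ B.1).card ≤ (D ∩ B.1).card := by
        have hsub2 : B.1 \ C ⊆ D ∩ B.1 := subset_inter hD1 sdiff_subset
        have := card_le_card hsub2
        omega
      obtain ⟨w, hw⟩ := ih ⟨D, hDcard⟩ B (by show k ≤ (D ∩ B.1).card + r * m; omega)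
      refine ⟨Walk.cons (kneser_adj (A := A) (C := ⟨C, hCcard⟩) hk hdAC)
        (Walk.cons (kneser_adj (A := ⟨C, hCcard⟩) (C := ⟨D, hDcard⟩) hk hdCD) w), ?_⟩
      simp only [Walk.length_cons]
      omega

/-- Upper bound, odd case: if `|A ∩ B| ≤ rm` then there is a walk of length `≤ 2m + 1`. -/
private lemma walk_upper_odd {k r : ℕ} (hk : 1 ≤ k) (hr : 1 ≤ r)
    (m : ℕ) (A B : {A : Finset (Fin (2 * k + r)) // A.card = k})
    (h : (A.1 ∩ B.1).card ≤ r * m) :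
    ∃ w : (kneserGraph (2 * k + r) k).Walk A B, w.length ≤ 2 * m + 1 := by
  have hcompl : (A.1ᶜ).card = k + r := by
    rw [card_compl, A.2, Fintype.card_fin]; omega
  have hBA : B.1 \ A.1 ⊆ A.1ᶜ := fun x hx => mem_compl.mpr (mem_sdiff.mp hx).2
  have hBAcard : (B.1 ∩ A.1).card + (B.1 \ A.1).card = k := by
    rw [card_inter_add_card_sdiff]; exact B.2
  obtain ⟨C, hC1, hC2, hCcard⟩ := exists_subsuperset_card_eq (n := k) hBA (by omega)
    (by rw [hcompl]; omega)
  have hdAC : Disjoint A.1 C := disjoint_left.mpr fun {x} hx hxC => by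
    have := hC2 hxC
    rw [mem_compl] at this
    exact this hx
  have hCB : k ≤ (C ∩ B.1).card + (A.1 ∩ B.1).card := by
    have hsub : B.1 \ A.1 ⊆ C ∩ B.1 := subset_inter hC1 sdiff_subset
    have h2 := card_le_card hsub
    have h3 : (B.1 ∩ A.1).card = (A.1 ∩ B.1).card := by rw [inter_comm]
    omega
  obtain ⟨w, hw⟩ := walk_upper_even hk hr m ⟨C, hCcard⟩ B
    (by show k ≤ (C ∩ B.1).card + r * m; omega)
  exact ⟨Walk.cons (kneser_adj (A := A) (C := ⟨C, hCcard⟩) hk hdAC) w,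
    by simp only [Walk.length_cons]; omega⟩

theorem stmt6 (k r p : ℕ) (hk : 2 ≤ k) (hr : 1 ≤ r) (hrk : r < k - 1) (hp : 1 ≤ p)
    (hnd : ¬ r ∣ (k - 1)) (hdiam : (kneserGraph (2 * k + r) k).diam = 2 * p)
    (A B : {A : Finset (Fin (2 * k + r)) // A.card = k}) :
    (kneserGraph (2 * k + r) k).dist A B = 2 * p ↔
      r * p - r + 1 ≤ (A.1 ∩ B.1).card ∧ (A.1 ∩ B.1).card ≤ k - r * p + r - 1 := by
  obtain ⟨p', rfl⟩ : ∃ p', p = p' + 1 := ⟨p - 1, by omega⟩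
  have hk1 : (1:ℕ) ≤ k := by omega
  have hmulsucc : r * (p' + 1) = r * p' + r := Nat.mul_succ r p'
  have hmul1 : 1 ≤ p' → r ≤ r * p' := fun h => Nat.le_mul_of_pos_right r h
  have hmul0 : p' = 0 → r * p' = 0 := fun h => by simp [h]
  have hne : Nonempty {A : Finset (Fin (2 * k + r)) // A.card = k} := by
    obtain ⟨s, _, hs⟩ := exists_subset_card_eq
      (s := (univ : Finset (Fin (2 * k + r)))) (n := k)
      (by rw [card_univ, Fintype.card_fin]; omega)
    exact ⟨⟨s, hs⟩⟩
  have hdne : (kneserGraph (2 * k + r) k).diam ≠ 0 := by rw [hdiam]; omega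
  have htop : (kneserGraph (2 * k + r) k).ediam ≠ ⊤ := ediam_ne_top_of_diam_ne_zero hdne
  have hreach : ∀ u v : {A : Finset (Fin (2 * k + r)) // A.card = k},
      (kneserGraph (2 * k + r) k).Reachable u v := fun u v =>
    reachable_of_edist_ne_top (fun h => htop (by rw [eq_top_iff, ← h]; exact edist_le_ediam))
  have hdle : ∀ u v : {A : Finset (Fin (2 * k + r)) // A.card = k},
      (kneserGraph (2 * k + r) k).dist u v ≤ 2 * (p' + 1) := fun u v =>
    hdiam ▸ dist_le_diam htop
  -- a pair realizing the diameter gives a lower bound on `k`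
  obtain ⟨u, v, huv⟩ := exists_dist_eq_diam (G := kneserGraph (2 * k + r) k)
  rw [hdiam] at huv
  have h1 : r * p' + 1 ≤ (u.1 ∩ v.1).card := by
    by_contra hcon
    obtain ⟨w, hw⟩ := walk_upper_odd hk1 hr p' u v (by omega)
    have hd2 := dist_le w
    omega
  have h2 : (u.1 ∩ v.1).card + r * p' + 1 ≤ k := by
    by_contra hcon
    obtain ⟨w, hw⟩ := walk_upper_even hk1 hr p' u v (by omega)
    have hd2 := dist_le w
    omega
  have hk2 : r * p' + r ≤ k := by
    rcases Nat.eq_zero_or_pos p' with h | h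
    · have := hmul0 h; omega
    · have := hmul1 h; omega
  constructor
  · intro hd
    obtain ⟨w, hw⟩ := (hreach A B).exists_walk_length_eq_dist
    have hLB := (walk_lower w (p' + 1)).1 (by omega)
    have h3 : r * p' + 1 ≤ (A.1 ∩ B.1).card := by
      by_contra hcon
      obtain ⟨w', hw'⟩ := walk_upper_odd hk1 hr p' A B (by omega)
      have hd2 := dist_le w'
      omega
    have h4 : (A.1 ∩ B.1).card + r * p' + 1 ≤ k := by
      by_contra hcon
      obtain ⟨w', hw'⟩ := walk_upper_even hk1 hr p' A B (by omega)
      have hd2 := dist_le w'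
      omega
    omega
  · intro hs
    obtain ⟨w, hw⟩ := (hreach A B).exists_walk_length_eq_dist
    rcases Nat.even_or_odd' w.length with ⟨m, hm | hm⟩
    · have hLB := (walk_lower w m).1 hm
      have hlt : r * p' < r * m := by omega
      have hm' : p' < m := Nat.lt_of_mul_lt_mul_left hlt
      have := hdle A B
      omega
    · have hLB := (walk_lower w m).2 hm
      have hlt : r * p' < r * m := by omega
      have hm' : p' < m := Nat.lt_of_mul_lt_mul_left hlt
      have := hdle A B
      omega
end

section
/- Let k ≥ 2 be a positive integer and let 1 < d ≤ k. Two k-subsets A, B of [2k+1] are at distance exactly d in the Kneser graph K(2k+1,k) if and only if |A ∩ B| = k - d/2 when d is even, and |A ∩ B| = (d-1)/2 when d is odd. -/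
namespace KAux

variable {k : ℕ}

abbrev V (k : ℕ) := {A : Finset (Fin (2 * k + 1)) // A.card = k}

abbrev G (k : ℕ) := kneserGraph (2 * k + 1) k

lemma adj_of_disjoint (hk : 1 ≤ k) {X Y : V k} (h : Disjoint X.1 Y.1) :
    (G k).Adj X Y := by
  refine ⟨fun he => ?_, h⟩
  subst he
  have h1 : X.1 = ∅ := Finset.eq_empty_of_forall_notMem fun a ha =>
    (Finset.disjoint_left.1 h ha) ha
  have h2 := X.2
  rw [h1] at h2
  simp at h2
  omega

lemma two_step (hk : 1 ≤ k) (B B' : V k) (x : Fin (2 * k + 1)) (hx : x ∉ B.1)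
    (hB' : B'.1 ⊆ insert x B.1) :
    ∃ C : V k, (G k).Adj B' C ∧ (G k).Adj C B := by
  have hcompl : B.1ᶜ.card = k + 1 := by
    rw [Finset.card_compl, Fintype.card_fin, B.2]; omega
  have hxB : x ∈ B.1ᶜ := Finset.mem_compl.2 hx
  refine ⟨⟨B.1ᶜ.erase x, by rw [Finset.card_erase_of_mem hxB, hcompl]; omega⟩, ?_, ?_⟩
  · refine adj_of_disjoint hk ?_
    rw [Finset.disjoint_left]
    intro a ha
    simp only [Finset.mem_erase, Finset.mem_compl, not_and, not_not]
    intro hne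
    rcases Finset.mem_insert.1 (hB' ha) with h | h
    · exact absurd h hne
    · exact h
  · refine adj_of_disjoint hk ?_
    rw [Finset.disjoint_left]
    intro a ha
    exact Finset.mem_compl.1 (Finset.mem_of_mem_erase ha)

-- key step inequality
lemma step_ineq (X Y : Finset (Fin (2 * k + 1))) (B : Finset (Fin (2 * k + 1)))
    (hX : X.card = k) (hY : Y.card = k) (hB : B.card = k) (h : Disjoint X Y) :
    (X ∩ B).card + (Y ∩ B).card ≤ k ∧ k ≤ (X ∩ B).card + (Y ∩ B).card + 1 := by
  have hdisj : Disjoint (X ∩ B) (Y ∩ B) :=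
    h.mono Finset.inter_subset_left Finset.inter_subset_left
  have hunion : (X ∩ B) ∪ (Y ∩ B) = (X ∪ Y) ∩ B := (Finset.union_inter_distrib_right X Y B).symm
  have hcard : (X ∩ B).card + (Y ∩ B).card = ((X ∪ Y) ∩ B).card := by
    rw [← hunion, Finset.card_union_of_disjoint hdisj]
  constructor
  · rw [hcard]
    calc ((X ∪ Y) ∩ B).card ≤ B.card := Finset.card_le_card Finset.inter_subset_right
      _ = k := hB
  · have hU : (X ∪ Y).card = 2 * k := by
      rw [Finset.card_union_of_disjoint h, hX, hY]; omega
    have hUc : (X ∪ Y)ᶜ.card = 1 := by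
      rw [Finset.card_compl, Fintype.card_fin, hU]; omega
    have hsub : B \ (X ∪ Y) ⊆ (X ∪ Y)ᶜ := fun a ha =>
      Finset.mem_compl.2 (Finset.mem_sdiff.1 ha).2
    have h1 : (B \ (X ∪ Y)).card ≤ 1 := by
      calc (B \ (X ∪ Y)).card ≤ (X ∪ Y)ᶜ.card := Finset.card_le_card hsub
        _ = 1 := hUc
    have h2 : (B ∩ (X ∪ Y)).card + (B \ (X ∪ Y)).card = B.card :=
      Finset.card_inter_add_card_sdiff B (X ∪ Y)
    rw [hcard, Finset.inter_comm]
    omega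

-- lower bound along a walk
lemma walk_lower : ∀ {X B : V k} (p : (G k).Walk X B),
    (Even p.length → 2 * k ≤ 2 * (X.1 ∩ B.1).card + p.length) ∧
    (¬ Even p.length → 2 * (X.1 ∩ B.1).card + 1 ≤ p.length) := by
  intro X B p
  induction p with
  | nil =>
    rename_i u
    constructor
    · intro _
      simp [Finset.inter_self, u.2]
    · intro h; simp at h
  | @cons X Y W hadj q ih =>
    have key := step_ineq X.1 Y.1 W.1 X.2 Y.2 W.2 hadj.2
    rw [SimpleGraph.Walk.length_cons]
    rcases Nat.even_or_odd q.length with he | ho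
    · have := ih.1 he
      constructor
      · intro h
        exfalso
        rcases he with ⟨m, hm⟩
        rcases h with ⟨n, hn⟩
        omega
      · intro _
        omega
    · have := ih.2 (Nat.not_even_iff_odd.symm.1 ho)
      constructor
      · intro _
        omega
      · intro h
        exfalso
        rcases ho with ⟨m, hm⟩
        exact h ⟨m + 1, by omega⟩

end KAux

namespace KAux
variable {k : ℕ}

lemma eq_of_inter_card (A B : V k) (h : (A.1 ∩ B.1).card = k) : A = B := by
  have h1 : A.1 ∩ B.1 = A.1 :=
    Finset.eq_of_subset_of_card_le Finset.inter_subset_left (by rw [h, A.2])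
  have h2 : A.1 ∩ B.1 = B.1 :=
    Finset.eq_of_subset_of_card_le Finset.inter_subset_right (by rw [h, B.2])
  exact Subtype.ext (h1 ▸ h2)

lemma walk_even (hk : 1 ≤ k) : ∀ t (A B : V k), (A.1 ∩ B.1).card + t = k →
    ∃ p : (G k).Walk A B, p.length ≤ 2 * t := by
  intro t
  induction t with
  | zero =>
    intro A B hs
    obtain rfl : A = B := eq_of_inter_card A B (by omega)
    exact ⟨SimpleGraph.Walk.nil, by simp⟩
  | succ t ih =>
    intro A B hs
    have hAd : (A.1 \ B.1).card = t + 1 := by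
      have := Finset.card_inter_add_card_sdiff A.1 B.1
      rw [A.2] at this; omega
    have hBd : (B.1 \ A.1).card = t + 1 := by
      have := Finset.card_inter_add_card_sdiff B.1 A.1
      rw [B.2, Finset.inter_comm] at this; omega
    obtain ⟨x, hx⟩ := Finset.card_pos.1 (by omega : 0 < (A.1 \ B.1).card)
    obtain ⟨y, hy⟩ := Finset.card_pos.1 (by omega : 0 < (B.1 \ A.1).card)
    obtain ⟨hxA, hxB⟩ := Finset.mem_sdiff.1 hx
    obtain ⟨hyB, hyA⟩ := Finset.mem_sdiff.1 hy
    have hxe : x ∉ B.1.erase y := fun h => hxB (Finset.mem_of_mem_erase h)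
    refine ?_
    set B' : V k := ⟨insert x (B.1.erase y), by
      rw [Finset.card_insert_of_notMem hxe, Finset.card_erase_of_mem hyB, B.2]; omega⟩ with hB'
    have hint : A.1 ∩ B'.1 = insert x (A.1 ∩ B.1) := by
      ext a
      simp only [hB', Finset.mem_inter, Finset.mem_insert, Finset.mem_erase]
      constructor
      · rintro ⟨haA, (rfl | ⟨hne, haB⟩)⟩
        · exact Or.inl rfl
        · exact Or.inr ⟨haA, haB⟩
      · rintro (rfl | ⟨haA, haB⟩)
        · exact ⟨hxA, Or.inl rfl⟩
        · refine ⟨haA, Or.inr ⟨?_, haB⟩⟩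
          rintro rfl; exact hyA haA
    have hcard : (A.1 ∩ B'.1).card + t = k := by
      rw [hint, Finset.card_insert_of_notMem (fun h => hxB (Finset.mem_inter.1 h).2)]
      omega
    obtain ⟨q, hq⟩ := ih A B' hcard
    obtain ⟨C, h1, h2⟩ := two_step hk B B' x hxB
      (by rw [hB']; exact Finset.insert_subset_insert x (Finset.erase_subset y B.1))
    refine ⟨q.append (SimpleGraph.Walk.cons h1 (SimpleGraph.Walk.cons h2 SimpleGraph.Walk.nil)), ?_⟩
    simp only [SimpleGraph.Walk.length_append, SimpleGraph.Walk.length_cons,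
      SimpleGraph.Walk.length_nil]
    omega

lemma walk_odd (hk : 1 ≤ k) : ∀ s (A B : V k), (A.1 ∩ B.1).card = s →
    ∃ p : (G k).Walk A B, p.length ≤ 2 * s + 1 := by
  intro s
  induction s with
  | zero =>
    intro A B hs
    have hdisj : Disjoint A.1 B.1 := by
      rw [Finset.disjoint_iff_inter_eq_empty]
      exact Finset.card_eq_zero.1 hs
    exact ⟨SimpleGraph.Walk.cons (adj_of_disjoint hk hdisj) SimpleGraph.Walk.nil, by simp⟩
  | succ s ih =>
    intro A B hs
    obtain ⟨y, hy⟩ := Finset.card_pos.1 (by omega : 0 < (A.1 ∩ B.1).card)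
    obtain ⟨hyA, hyB⟩ := Finset.mem_inter.1 hy
    have hU : (A.1 ∪ B.1).card = 2 * k - (s + 1) := by
      have := Finset.card_inter_add_card_union A.1 B.1
      rw [A.2, B.2, hs] at this; omega
    have hUc : 0 < (A.1 ∪ B.1)ᶜ.card := by
      rw [Finset.card_compl, Fintype.card_fin, hU]; omega
    obtain ⟨x, hxc⟩ := Finset.card_pos.1 hUc
    have hx := Finset.mem_compl.1 hxc
    have hxA : x ∉ A.1 := fun h => hx (Finset.mem_union_left _ h)
    have hxB : x ∉ B.1 := fun h => hx (Finset.mem_union_right _ h)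
    have hxe : x ∉ B.1.erase y := fun h => hxB (Finset.mem_of_mem_erase h)
    set B' : V k := ⟨insert x (B.1.erase y), by
      rw [Finset.card_insert_of_notMem hxe, Finset.card_erase_of_mem hyB, B.2]; omega⟩ with hB'
    have hint : A.1 ∩ B'.1 = (A.1 ∩ B.1).erase y := by
      ext a
      simp only [hB', Finset.mem_inter, Finset.mem_insert, Finset.mem_erase]
      constructor
      · rintro ⟨haA, (rfl | ⟨hne, haB⟩)⟩
        · exact absurd haA hxA
        · exact ⟨hne, haA, haB⟩
      · rintro ⟨hne, haA, haB⟩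
        exact ⟨haA, Or.inr ⟨hne, haB⟩⟩
    have hcard : (A.1 ∩ B'.1).card = s := by
      rw [hint, Finset.card_erase_of_mem hy, hs]; omega
    obtain ⟨q, hq⟩ := ih A B' hcard
    obtain ⟨C, h1, h2⟩ := two_step hk B B' x hxB
      (by rw [hB']; exact Finset.insert_subset_insert x (Finset.erase_subset y B.1))
    refine ⟨q.append (SimpleGraph.Walk.cons h1 (SimpleGraph.Walk.cons h2 SimpleGraph.Walk.nil)), ?_⟩
    simp only [SimpleGraph.Walk.length_append, SimpleGraph.Walk.length_cons,
      SimpleGraph.Walk.length_nil]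
    omega

end KAux

theorem stmt9 (k d : ℕ) (hk : 2 ≤ k) (hd1 : 1 < d) (hd2 : d ≤ k)
    (A B : {A : Finset (Fin (2 * k + 1)) // A.card = k}) :
    (kneserGraph (2 * k + 1) k).dist A B = d ↔
      (A.1 ∩ B.1).card = (if Even d then k - d / 2 else (d - 1) / 2) := by
  have hk1 : 1 ≤ k := by omega
  set s := (A.1 ∩ B.1).card with hsdef
  have hsk : s ≤ k := by
    have h := Finset.card_le_card ((Finset.inter_subset_left : A.1 ∩ B.1 ⊆ A.1))
    rw [A.2] at h
    exact h
  obtain ⟨pe, hpe⟩ := KAux.walk_even hk1 (k - s) A B (by omega)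
  obtain ⟨po, hpo⟩ := KAux.walk_odd hk1 s A B rfl
  set D := (kneserGraph (2 * k + 1) k).dist A B with hD
  have hue : D ≤ 2 * (k - s) := le_trans (SimpleGraph.dist_le pe) hpe
  have huo : D ≤ 2 * s + 1 := le_trans (SimpleGraph.dist_le po) hpo
  have hreach : (kneserGraph (2 * k + 1) k).Reachable A B := ⟨po⟩
  obtain ⟨p, hp⟩ := hreach.exists_walk_length_eq_dist
  have hl := KAux.walk_lower (k := k) p
  rw [hp] at hl
  obtain ⟨h1, h2⟩ := hl
  rw [← hD] at h1 h2
  rw [Nat.even_iff] at h1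
  rw [Nat.even_iff] at h2
  simp only [Nat.even_iff]
  by_cases hE : d % 2 = 0
  · rw [if_pos hE]
    constructor
    · intro h; omega
    · intro h; omega
  · rw [if_neg hE]
    constructor
    · intro h; omega
    · intro h; omega
end

section
/- Let k ≥ 2, 1 ≤ r < k-1, p ≥ 1, with 2p < diam(K(2k+r,k)) or r dividing k-1. If A and B are k-subsets of [2k+r] joined by a path of length ℓ in the exact distance-2p Kneser graph K_{=2p}(2k+r,k), then |A ∩ B| ≥ k - ℓrp. -/
/-- Triangle inequality for intersection cardinalities. -/
lemma stmt12_tri {n k : ℕ} (A B C : Finset (Fin n)) (hB : B.card = k) :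
    (A ∩ B).card + (B ∩ C).card ≤ (A ∩ C).card + k := by
  have h1 : ((A ∩ B) ∩ (B ∩ C)).card ≤ (A ∩ C).card := by
    apply Finset.card_le_card
    intro x hx
    simp only [Finset.mem_inter] at hx ⊢
    exact ⟨hx.1.1, hx.2.2⟩
  have h2 : ((A ∩ B) ∪ (B ∩ C)).card ≤ k := by
    rw [← hB]
    apply Finset.card_le_card
    intro x hx
    simp only [Finset.mem_union, Finset.mem_inter] at hx
    rcases hx with h | h
    · exact h.2
    · exact h.1
  have := Finset.card_inter_add_card_union (A ∩ B) (B ∩ C)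
  omega

/-- Two sets disjoint from a common `k`-set in `Fin (2k+r)` intersect in ≥ k - r elements. -/
lemma stmt12_pair {k r : ℕ} (X Y Z : Finset (Fin (2 * k + r)))
    (hX : X.card = k) (hY : Y.card = k) (hZ : Z.card = k)
    (hXZ : Disjoint X Z) (hYZ : Disjoint Y Z) :
    k ≤ (X ∩ Y).card + r := by
  have hsub : X ∪ Y ⊆ Zᶜ := by
    intro x hx
    simp only [Finset.mem_compl]
    rcases Finset.mem_union.mp hx with h | h
    · exact fun hz => (Finset.disjoint_left.mp hXZ) h hz
    · exact fun hz => (Finset.disjoint_left.mp hYZ) h hz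
  have hc : Zᶜ.card = k + r := by
    rw [Finset.card_compl, hZ]
    simp [Fintype.card_fin]
    omega
  have h1 : (X ∪ Y).card ≤ k + r := hc ▸ Finset.card_le_card hsub
  have := Finset.card_inter_add_card_union X Y
  omega

/-- A walk of even length `2*i` in the Kneser graph loses at most `r*i` of intersection. -/
lemma stmt12_walk {k r : ℕ} :
    ∀ (i : ℕ) (X Y : {A : Finset (Fin (2 * k + r)) // A.card = k})
      (w : (kneserGraph (2 * k + r) k).Walk X Y), w.length = 2 * i →
      k ≤ (X.1 ∩ Y.1).card + r * i := by
  intro i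
  induction i with
  | zero =>
    intro X Y w hw
    have : X = Y := by
      cases w with
      | nil => rfl
      | cons h w' => simp at hw
    subst this
    simp [Finset.inter_self, X.2]
  | succ n ih =>
    intro X Y w hw
    cases w with
    | nil => simp at hw
    | @cons _ Z _ h w' =>
      cases w' with
      | nil => simp at hw; omega
      | @cons _ W _ h' w'' =>
        have hlen : w''.length = 2 * n := by
          simp [SimpleGraph.Walk.length_cons] at hw; omega
        have h1 := ih W Y w'' hlen
        have h2 : k ≤ (X.1 ∩ W.1).card + r :=
          stmt12_pair X.1 W.1 Z.1 X.2 W.2 Z.2 h.2 (h'.2.symm)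
        have h3 := stmt12_tri X.1 W.1 Y.1 W.2
        have h4 : r * (n + 1) = r * n + r := by ring
        omega

theorem stmt12 (k r p ℓ : ℕ) (hk : 2 ≤ k) (hr : 1 ≤ r) (hrk : r < k - 1) (hp : 1 ≤ p)
    (hcond : 2 * p < (kneserGraph (2 * k + r) k).diam ∨ r ∣ (k - 1))
    (A B : {A : Finset (Fin (2 * k + r)) // A.card = k})
    (hpath : ∃ w : (exactDistanceGraph (kneserGraph (2 * k + r) k) (2 * p)).Walk A B,
      w.length = ℓ) :
    k - ℓ * r * p ≤ (A.1 ∩ B.1).card := by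
  obtain ⟨w, hw⟩ := hpath
  suffices h : k ≤ (A.1 ∩ B.1).card + ℓ * r * p by omega
  clear hk hr hrk hcond
  induction w generalizing ℓ with
  | @nil u =>
    subst hw
    simp [Finset.inter_self, u.2]
  | @cons X Z Y h w' ih =>
    have hZY := ih (w'.length) rfl
    have hdist : (kneserGraph (2 * k + r) k).dist X Z = 2 * p := h.2
    have hreach : (kneserGraph (2 * k + r) k).Reachable X Z := by
      by_contra hnr
      have := SimpleGraph.dist_eq_zero_of_not_reachable hnr
      omega
    obtain ⟨w2, hw2⟩ := hreach.exists_walk_length_eq_dist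
    rw [hdist] at hw2
    have hXZ := stmt12_walk p X Z w2 hw2
    have htri := stmt12_tri X.1 Z.1 Y.1 Z.2
    subst hw
    simp only [SimpleGraph.Walk.length_cons]
    have : (w'.length + 1) * r * p = w'.length * r * p + r * p := by ring
    omega
end

section
/- Let k ≥ 2, 1 ≤ r < k-1, p ≥ 1, and let A, B be non-adjacent k-subsets of [2k+r] in the exact distance-2p Kneser graph K_{=2p}(2k+r,k) with |A ∩ B| = s. Then dist_{K_{=2p}(2k+r,k)}(A,B) = max{2, ⌈(k-s)/(rp)⌉}. -/
open Finset SimpleGraph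

namespace Stmt14Aux

/-- Swap lemma: modify `X` by removing `a` elements of `X∩B`, `b` elements of `X\B`,
adding `c` elements of `B\X` and `e` elements outside `X∪B`. -/
lemma swap_lemma {n k : ℕ} {X B : Finset (Fin n)} (hX : X.card = k)
    (a b c e : ℕ) (ha : a ≤ (X ∩ B).card) (hb : b ≤ (X \ B).card) (hc : c ≤ (B \ X).card)
    (he : e ≤ ((X ∪ B)ᶜ).card) (hbal : a + b = c + e) :
    ∃ C : Finset (Fin n), C.card = k ∧ (C ∩ X).card + (a + b) = k ∧
      (C ∩ B).card + a = (X ∩ B).card + c := by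
  obtain ⟨Da, hDa, hDac⟩ := Finset.exists_subset_card_eq ha
  obtain ⟨Db, hDb, hDbc⟩ := Finset.exists_subset_card_eq hb
  obtain ⟨Dc, hDc, hDcc⟩ := Finset.exists_subset_card_eq hc
  obtain ⟨De, hDe, hDec⟩ := Finset.exists_subset_card_eq he
  refine ⟨(X \ (Da ∪ Db)) ∪ (Dc ∪ De), ?_, ?_, ?_⟩ <;>
  · have haX : ∀ x ∈ Da, x ∈ X ∧ x ∈ B := fun x hx => Finset.mem_inter.mp (hDa hx)
    have hbX : ∀ x ∈ Db, x ∈ X ∧ x ∉ B := fun x hx => Finset.mem_sdiff.mp (hDb hx)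
    have hcX : ∀ x ∈ Dc, x ∈ B ∧ x ∉ X := fun x hx => Finset.mem_sdiff.mp (hDc hx)
    have heX : ∀ x ∈ De, x ∉ X ∧ x ∉ B := by
      intro x hx
      have := hDe hx
      simp only [Finset.mem_compl, Finset.mem_union] at this
      exact ⟨fun h => this (Or.inl h), fun h => this (Or.inr h)⟩
    -- key set identities
    have hDoutsub : Da ∪ Db ⊆ X := by
      intro x hx
      rcases Finset.mem_union.mp hx with h | h
      · exact (haX x h).1
      · exact (hbX x h).1
    have hDoutcard : (Da ∪ Db).card = a + b := by
      rw [Finset.card_union_of_disjoint, hDac, hDbc]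
      exact Finset.disjoint_left.mpr fun x hx hx' => (hbX x hx').2 (haX x hx).2
    have hCX : ((X \ (Da ∪ Db)) ∪ (Dc ∪ De)) ∩ X = X \ (Da ∪ Db) := by
      ext x
      simp only [Finset.mem_inter, Finset.mem_union, Finset.mem_sdiff]
      constructor
      · rintro ⟨h1 | h1, h2⟩
        · exact h1
        · rcases h1 with h | h
          · exact absurd h2 (hcX x h).2
          · exact absurd h2 (heX x h).1
      · intro h; exact ⟨Or.inl h, h.1⟩
    have hCB : ((X \ (Da ∪ Db)) ∪ (Dc ∪ De)) ∩ B = ((X ∩ B) \ Da) ∪ Dc := by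
      ext x
      simp only [Finset.mem_inter, Finset.mem_union, Finset.mem_sdiff]
      constructor
      · rintro ⟨h1 | h1, h2⟩
        · exact Or.inl ⟨⟨h1.1, h2⟩, fun h => h1.2 (Or.inl h)⟩
        · rcases h1 with h | h
          · exact Or.inr h
          · exact absurd h2 (heX x h).2
      · rintro (⟨⟨h1, h2⟩, h3⟩ | h)
        · refine ⟨Or.inl ⟨h1, ?_⟩, h2⟩
          rintro (h | h)
          · exact h3 h
          · exact (hbX x h).2 h2
        · exact ⟨Or.inr (Or.inl h), (hcX x h).1⟩
    have hsd : (X \ (Da ∪ Db)).card + (a + b) = k := by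
      rw [← hDoutcard, Finset.card_sdiff_add_card_eq_card hDoutsub, hX]
    have hdisj1 : Disjoint (X \ (Da ∪ Db)) (Dc ∪ De) := by
      refine Finset.disjoint_left.mpr fun x hx hx' => ?_
      rcases Finset.mem_union.mp hx' with h | h
      · exact (hcX x h).2 (Finset.mem_sdiff.mp hx).1
      · exact (heX x h).1 (Finset.mem_sdiff.mp hx).1
    have hdisj2 : Disjoint Dc De :=
      Finset.disjoint_left.mpr fun x hx hx' => (heX x hx').2 (hcX x hx).1
    have hdisj3 : Disjoint ((X ∩ B) \ Da) Dc :=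
      Finset.disjoint_left.mpr fun x hx hx' =>
        (hcX x hx').2 (Finset.mem_inter.mp (Finset.mem_sdiff.mp hx).1).1
    first
    | (rw [Finset.card_union_of_disjoint hdisj1, Finset.card_union_of_disjoint hdisj2,
        hDcc, hDec]; omega)
    | (rw [hCX]; omega)
    | (rw [hCB, Finset.card_union_of_disjoint hdisj3, hDcc]
       have := Finset.card_sdiff_add_card_eq_card hDa
       omega)


variable {k r : ℕ}

abbrev KV (k r : ℕ) := {A : Finset (Fin (2*k+r)) // A.card = k}
local notation "V" => KV k r
local notation "G" => kneserGraph (2*k+r) k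

/-- helper: intersection cards under one-step replacement. -/
lemma inter_mono_step (X T Y : Finset (Fin (2*k+r))) :
    (T ∩ Y).card ≤ (X ∩ Y).card + (T \ X).card := by
  have hsub : T ∩ Y ⊆ (X ∩ Y) ∪ (T \ X) := by
    intro x hx
    rcases Finset.mem_inter.mp hx with ⟨h1, h2⟩
    by_cases hX : x ∈ X
    · exact Finset.mem_union_left _ (Finset.mem_inter.mpr ⟨hX, h2⟩)
    · exact Finset.mem_union_right _ (Finset.mem_sdiff.mpr ⟨h1, hX⟩)
  exact le_trans (Finset.card_le_card hsub) (Finset.card_union_le _ _)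

lemma two_step {X Z1 Z2 : V} (h1 : (G).Adj X Z1) (h2 : (G).Adj Z1 Z2) :
    k ≤ (X.1 ∩ Z2.1).card + r := by
  have hsub : X.1 ∪ Z2.1 ⊆ (Z1.1)ᶜ := by
    intro x hx
    rw [Finset.mem_compl]
    rcases Finset.mem_union.mp hx with h | h
    · exact fun hz => (Finset.disjoint_left.mp h1.2) h hz
    · exact fun hz => (Finset.disjoint_left.mp h2.2.symm) h hz
  have hcompl : ((Z1.1)ᶜ).card = k + r := by
    rw [Finset.card_compl, Z1.2, Fintype.card_fin]; omega
  have hle : (X.1 ∪ Z2.1).card ≤ k + r := hcompl ▸ Finset.card_le_card hsub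
  have := Finset.card_union_add_card_inter X.1 Z2.1
  rw [X.2, Z2.2] at this
  omega

lemma even_walk_bound : ∀ (q : ℕ) (X Y : V) (w : (G).Walk X Y),
    w.length = 2*q → k ≤ (X.1 ∩ Y.1).card + r*q := by
  intro q
  induction q with
  | zero =>
    intro X Y w hw
    have : X = Y := w.eq_of_length_eq_zero (by omega)
    subst this
    rw [Finset.inter_self, X.2]
    omega
  | succ q ih =>
    intro X Y w hw
    cases w with
    | nil => simp at hw
    | cons h1 w' =>
      cases w' with
      | nil => simp at hw; omega
      | cons h2 w'' =>
        rename_i Z1 Z2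
        have hl : w''.length = 2*q := by
          simp only [SimpleGraph.Walk.length_cons] at hw; omega
        have hIH := ih _ _ w'' hl
        have hts := two_step h1 h2
        have hmono := inter_mono_step (k := k) (r := r) X.1 Z2.1 Y.1
        have hZ2 : (Z2.1 \ X.1).card + (Z2.1 ∩ X.1).card = k := by
          rw [Finset.card_sdiff_add_card_inter, Z2.2]
        rw [Finset.inter_comm] at hZ2
        have : r * (q+1) = r*q + r := by ring
        omega

lemma odd_walk_bound : ∀ (q : ℕ) (X Y : V) (w : (G).Walk X Y),
    w.length = 2*q + 1 → (X.1 ∩ Y.1).card ≤ r*q := by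
  intro q X Y w hw
  cases w with
  | nil => simp at hw
  | cons h1 w' =>
    rename_i Z1
    have hl : w'.length = 2*q := by
      simp only [SimpleGraph.Walk.length_cons] at hw; omega
    have hIH := even_walk_bound q _ _ w' hl
    -- X∩Y and Z1∩Y are disjoint subsets of Y
    have hdisj : Disjoint (X.1 ∩ Y.1) (Z1.1 ∩ Y.1) :=
      Finset.disjoint_left.mpr fun x hx hx' =>
        (Finset.disjoint_left.mp h1.2) (Finset.mem_inter.mp hx).1 (Finset.mem_inter.mp hx').1
    have hsub : (X.1 ∩ Y.1) ∪ (Z1.1 ∩ Y.1) ⊆ Y.1 := by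
      intro x hx
      rcases Finset.mem_union.mp hx with h | h
      · exact (Finset.mem_inter.mp h).2
      · exact (Finset.mem_inter.mp h).2
    have hcard : (X.1 ∩ Y.1).card + (Z1.1 ∩ Y.1).card ≤ k := by
      have h' := Finset.card_le_card hsub
      rw [Finset.card_union_of_disjoint hdisj] at h'
      have hYc := Y.2
      omega
    omega

/-- A swap lemma result as vertices. -/
lemma swap_lemma' (hk : 1 ≤ k) (X B : V)
    (a b c e : ℕ) (ha : a ≤ (X.1 ∩ B.1).card) (hb : b ≤ (X.1 \ B.1).card)
    (hc : c ≤ (B.1 \ X.1).card) (he : e ≤ ((X.1 ∪ B.1)ᶜ).card) (hbal : a + b = c + e) :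
    ∃ C : V, (C.1 ∩ X.1).card + (a + b) = k ∧
      (C.1 ∩ B.1).card + a = (X.1 ∩ B.1).card + c := by
  obtain ⟨C, hC, h1, h2⟩ := swap_lemma X.2 a b c e ha hb hc he hbal
  exact ⟨⟨C, hC⟩, h1, h2⟩

lemma ne_of_disjoint (hk : 1 ≤ k) {X Z : KV k r} (h : Disjoint X.1 Z.1) : X ≠ Z := by
  intro hEq
  rw [hEq] at h
  rw [disjoint_self] at h
  have := Z.2
  rw [h] at this
  simp at this
  omega

lemma inter_card_le (X Y : KV k r) : (X.1 ∩ Y.1).card ≤ k := by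
  have := Finset.card_le_card (Finset.inter_subset_left : X.1 ∩ Y.1 ⊆ X.1)
  rw [X.2] at this; exact this

/-- there is a walk of length 2 between any two vertices whose union misses `k` points. -/
lemma two_walk (hk : 1 ≤ k) (X Z : V) (h : k ≤ (X.1 ∩ Z.1).card + r) :
    ∃ w : (G).Walk X Z, w.length = 2 := by
  have hXZ : (X.1 ∪ Z.1).card + (X.1 ∩ Z.1).card = k + k := by
    rw [Finset.card_union_add_card_inter, X.2, Z.2]
  have hcompl : ((X.1 ∪ Z.1)ᶜ).card + (X.1 ∪ Z.1).card = 2*k + r := by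
    have htot := Finset.card_le_univ (X.1 ∪ Z.1)
    rw [Fintype.card_fin] at htot
    rw [Finset.card_compl, Fintype.card_fin]
    omega
  have hbig : k ≤ ((X.1 ∪ Z.1)ᶜ).card := by omega
  obtain ⟨M, hMsub, hMcard⟩ := Finset.exists_subset_card_eq hbig
  set m : V := ⟨M, hMcard⟩ with hm
  have hdisjX : Disjoint X.1 M := Finset.disjoint_right.mpr fun x hx hx' =>
    (Finset.mem_compl.mp (hMsub hx)) (Finset.mem_union_left _ hx')
  have hdisjZ : Disjoint M Z.1 := Finset.disjoint_left.mpr fun x hx hx' =>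
    (Finset.mem_compl.mp (hMsub hx)) (Finset.mem_union_right _ hx')
  have hne1 : X ≠ m := ne_of_disjoint hk hdisjX
  have hne2 : m ≠ Z := ne_of_disjoint hk (by
    have : Disjoint Z.1 M := hdisjZ.symm
    exact this.symm)
  exact ⟨SimpleGraph.Walk.cons ⟨hne1, hdisjX⟩ (SimpleGraph.Walk.cons ⟨hne2, hdisjZ⟩
    SimpleGraph.Walk.nil), rfl⟩

lemma vertex_eq_of_inter (X Y : V) (h : k ≤ (X.1 ∩ Y.1).card) : X = Y := by
  have hsub : X.1 ∩ Y.1 ⊆ X.1 := Finset.inter_subset_left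
  have h1 : X.1 ∩ Y.1 = X.1 := Finset.eq_of_subset_of_card_le hsub (by rw [X.2]; exact h)
  have h2 : X.1 ⊆ Y.1 := by rw [← h1]; exact Finset.inter_subset_right
  exact Subtype.ext (Finset.eq_of_subset_of_card_le h2 (by rw [X.2, Y.2]))

lemma even_walk_construct (hk : 1 ≤ k) (hr : 1 ≤ r) :
    ∀ (q : ℕ) (X Y : V), k ≤ (X.1 ∩ Y.1).card + r*q →
    ∃ w : (G).Walk X Y, w.length = 2*q := by
  intro q
  induction q with
  | zero =>
    intro X Y h
    have : X = Y := vertex_eq_of_inter X Y (by omega)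
    subst this
    exact ⟨SimpleGraph.Walk.nil, rfl⟩
  | succ q ih =>
    intro X Y h
    by_cases hcase : k ≤ (X.1 ∩ Y.1).card + r*q
    · obtain ⟨w1, hw1⟩ := ih X Y hcase
      obtain ⟨w2, hw2⟩ := two_walk hk X X (by rw [Finset.inter_self, X.2]; omega)
      exact ⟨w2.append w1, by rw [SimpleGraph.Walk.length_append, hw1, hw2]; ring⟩
    · push_neg at hcase
      have ht : (X.1 ∩ Y.1).card ≤ k := inter_card_le X Y
      have hXY : (X.1 \ Y.1).card + (X.1 ∩ Y.1).card = k := by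
        rw [Finset.card_sdiff_add_card_inter, X.2]
      have hYX : (Y.1 \ X.1).card + (X.1 ∩ Y.1).card = k := by
        rw [Finset.inter_comm, Finset.card_sdiff_add_card_inter, Y.2]
      set d := min r (k - (X.1 ∩ Y.1).card) with hd
      obtain ⟨C, hC1, hC2⟩ := swap_lemma' hk X Y 0 d d 0 (Nat.zero_le _)
        (by omega) (by omega) (Nat.zero_le _) (by omega)
      obtain ⟨w1, hw1⟩ := two_walk hk X C (by rw [Finset.inter_comm]; omega)
      obtain ⟨w2, hw2⟩ := ih C Y (by
        have hmin := Nat.min_le_left r (k - (X.1 ∩ Y.1).card)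
        have hmin2 := Nat.min_le_right r (k - (X.1 ∩ Y.1).card)
        have hor : d = r ∨ d = k - (X.1 ∩ Y.1).card := min_choice _ _
        have hq : r * (q+1) = r*q + r := by ring
        omega)
      exact ⟨w1.append w2, by rw [SimpleGraph.Walk.length_append, hw1, hw2]; ring⟩

lemma odd_walk_construct (hk : 1 ≤ k) (hr : 1 ≤ r) (q : ℕ) (X Y : V)
    (h : (X.1 ∩ Y.1).card ≤ r*q) :
    ∃ w : (G).Walk X Y, w.length = 2*q + 1 := by
  have ht : (X.1 ∩ Y.1).card ≤ k := inter_card_le X Y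
  have hYX : (Y.1 \ X.1).card + (X.1 ∩ Y.1).card = k := by
    rw [Finset.inter_comm, Finset.card_sdiff_add_card_inter, Y.2]
  have hXc : ((X.1)ᶜ).card = k + r := by
    rw [Finset.card_compl, X.2, Fintype.card_fin]; omega
  have hsub0 : Y.1 \ X.1 ⊆ (X.1)ᶜ := fun x hx =>
    Finset.mem_compl.mpr (Finset.mem_sdiff.mp hx).2
  obtain ⟨M, hMsup, hMsub, hMcard⟩ := Finset.exists_subsuperset_card_eq (n := k) hsub0
    (by omega) (by omega)
  set z : V := ⟨M, hMcard⟩ with hz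
  have hdisj : Disjoint X.1 M := Finset.disjoint_right.mpr fun x hx hx' =>
    (Finset.mem_compl.mp (hMsub hx)) hx'
  have hne : X ≠ z := ne_of_disjoint hk hdisj
  have hzY : k ≤ (M ∩ Y.1).card + r*q := by
    have hsub2 : Y.1 \ X.1 ⊆ M ∩ Y.1 := fun x hx =>
      Finset.mem_inter.mpr ⟨hMsup hx, (Finset.mem_sdiff.mp hx).1⟩
    have := Finset.card_le_card hsub2
    omega
  obtain ⟨w, hw⟩ := even_walk_construct hk hr q z Y hzY
  exact ⟨SimpleGraph.Walk.cons (show (G).Adj X z from ⟨hne, hdisj⟩) w, by simp [hw]⟩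

section G2
variable {p : ℕ}

/-- certificate for exact Kneser distance `2*p`. -/
lemma dist_eq_2p (hk : 1 ≤ k) (hr : 1 ≤ r) (hp : 1 ≤ p) (X Y : KV k r)
    (hub : k ≤ (X.1 ∩ Y.1).card + r*p)
    (hlb1 : (X.1 ∩ Y.1).card + r*(p-1) < k)
    (hlb2 : r*(p-1) < (X.1 ∩ Y.1).card) :
    X ≠ Y ∧ (G).dist X Y = 2*p := by
  have hne : X ≠ Y := by
    intro hEq
    rw [hEq, Finset.inter_self] at hlb1
    have hYc := Y.2
    omega
  obtain ⟨w, hw⟩ := even_walk_construct hk hr p X Y hub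
  have hdle : (G).dist X Y ≤ 2*p := hw ▸ SimpleGraph.dist_le w
  refine ⟨hne, le_antisymm hdle ?_⟩
  by_contra hlt
  push_neg at hlt
  have hreach : (G).Reachable X Y := ⟨w⟩
  obtain ⟨w', hw'⟩ := hreach.exists_walk_length_eq_dist
  rcases Nat.even_or_odd ((G).dist X Y) with ⟨q, hq⟩ | ⟨q, hq⟩
  · have hq' : q ≤ p - 1 := by omega
    have := even_walk_bound q X Y w' (by omega)
    have hmono : r*q ≤ r*(p-1) := Nat.mul_le_mul_left r hq'
    omega
  · have hq' : q ≤ p - 1 := by omega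
    have := odd_walk_bound q X Y w' (by omega)
    have hmono : r*q ≤ r*(p-1) := Nat.mul_le_mul_left r (by omega)
    omega

/-- the converse: an edge of the exact-distance graph has large intersection. -/
lemma inter_ge_of_dist_2p (hp : 1 ≤ p) (X Y : KV k r) (hd : (G).dist X Y = 2*p) (hne : X ≠ Y) :
    k ≤ (X.1 ∩ Y.1).card + r*p := by
  have hdne : (G).dist X Y ≠ 0 := by omega
  obtain ⟨w, -⟩ := SimpleGraph.exists_walk_of_dist_ne_zero hdne
  have hreach : (G).Reachable X Y := ⟨w⟩
  obtain ⟨w', hw'⟩ := hreach.exists_walk_length_eq_dist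
  exact even_walk_bound p X Y w' (by omega)

/-- Key consequence of the diameter hypothesis. -/
lemma k_big (hk : 1 ≤ k) (hr : 1 ≤ r) (hp : 1 ≤ p) (hD : 2*p ≤ (kneserGraph (2*k+r) k).diam) : 2*r*(p-1) + 2 ≤ k := by
  have : Nonempty (KV k r) := by
    have huniv : k ≤ (Finset.univ : Finset (Fin (2*k+r))).card := by
      rw [Finset.card_univ, Fintype.card_fin]; omega
    obtain ⟨M, -, hM⟩ := Finset.exists_subset_card_eq huniv
    exact ⟨⟨M, hM⟩⟩
  obtain ⟨U, W, hUW⟩ := @SimpleGraph.exists_dist_eq_diam _ (kneserGraph (2*k+r) k) _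
  have hge : 2*p ≤ (G).dist U W := hUW ▸ hD
  have h1 : ¬ (k ≤ (U.1 ∩ W.1).card + r*(p-1)) := by
    intro hcon
    obtain ⟨w, hw⟩ := even_walk_construct hk hr (p-1) U W hcon
    have := hw ▸ SimpleGraph.dist_le w
    omega
  have h2 : ¬ ((U.1 ∩ W.1).card ≤ r*(p-1)) := by
    intro hcon
    obtain ⟨w, hw⟩ := odd_walk_construct hk hr (p-1) U W hcon
    have := hw ▸ SimpleGraph.dist_le w
    omega
  push_neg at h1 h2
  have hring : 2*r*(p-1) = r*(p-1) + r*(p-1) := by ring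
  omega

end G2

section chain
variable {p : ℕ}

local notation "G2" => exactDistanceGraph (kneserGraph (2*k+r) k) (2*p)

lemma edge_of (hk : 1 ≤ k) (hr : 1 ≤ r) (hp : 1 ≤ p) (X Y : KV k r) (d : ℕ)
    (h1 : (X.1 ∩ Y.1).card + d = k) (h2 : r*(p-1)+1 ≤ d) (h3 : d ≤ r*p)
    (h4 : d + (r*(p-1)+1) ≤ k) : (G2).Adj X Y := by
  obtain ⟨hne, hd⟩ := dist_eq_2p hk hr hp X Y (by omega) (by omega) (by omega)
  exact ⟨hne, hd⟩

lemma g2_edge_inter (hp : 1 ≤ p) {X Y : KV k r} (h : (G2).Adj X Y) :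
    k ≤ (X.1 ∩ Y.1).card + r*p :=
  inter_ge_of_dist_2p hp X Y h.2 h.1

lemma g2_walk_bound (hp : 1 ≤ p) {X Y : KV k r} (w : (G2).Walk X Y) :
    k ≤ (X.1 ∩ Y.1).card + w.length * (r*p) := by
  induction w with
  | nil =>
    rename_i X'
    simp only [SimpleGraph.Walk.length_nil, Finset.inter_self]
    have := X'.2
    omega
  | cons h w' ih =>
    rename_i X' Z Y'
    have hXZ := g2_edge_inter hp h
    have hmono := inter_mono_step (k := k) (r := r) X'.1 Z.1 Y'.1
    have hZcard : (Z.1 \ X'.1).card + (Z.1 ∩ X'.1).card = k := by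
      rw [Finset.card_sdiff_add_card_inter, Z.2]
    rw [Finset.inter_comm] at hZcard
    have hlen : (SimpleGraph.Walk.cons h w').length = w'.length + 1 :=
      SimpleGraph.Walk.length_cons _ _
    rw [hlen]
    have hring : (w'.length + 1) * (r*p) = w'.length * (r*p) + r*p := by ring
    omega

/-- standard card facts about a pair of k-subsets. -/
lemma card_facts (X B : KV k r) :
    (X.1 \ B.1).card + (X.1 ∩ B.1).card = k ∧
    (B.1 \ X.1).card + (X.1 ∩ B.1).card = k ∧
    ((X.1 ∪ B.1)ᶜ).card + k + k = 2*k + r + (X.1 ∩ B.1).card := by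
  refine ⟨?_, ?_, ?_⟩
  · rw [Finset.card_sdiff_add_card_inter, X.2]
  · rw [Finset.inter_comm, Finset.card_sdiff_add_card_inter, B.2]
  · have h1 : (X.1 ∪ B.1).card + (X.1 ∩ B.1).card = k + k := by
      rw [Finset.card_union_add_card_inter, X.2, B.2]
    have h2 : ((X.1 ∪ B.1)ᶜ).card + (X.1 ∪ B.1).card = 2*k + r := by
      have htot := Finset.card_le_univ (X.1 ∪ B.1)
      rw [Fintype.card_fin] at htot
      rw [Finset.card_compl, Fintype.card_fin]
      omega
    omega

lemma claim2 (hr : 1 ≤ r) (hp : 1 ≤ p) (kbig : 2*r*(p-1)+2 ≤ k) (B X : KV k r)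
    (h : k ≤ (X.1 ∩ B.1).card + 2 * min (r*p) (k - (r*(p-1)+1))) :
    ∃ w : (G2).Walk X B, w.length ≤ 2 := by
  have hk : 1 ≤ k := by omega
  have hrel : r * p = r*(p-1) + r := by
    conv_lhs => rw [show p = (p-1)+1 by omega]
    rw [Nat.mul_succ]
  have hrr : 2*r*(p-1) = r*(p-1) + r*(p-1) := by ring
  set dlo := r*(p-1)+1 with hdlo
  set D := min (r*p) (k - dlo) with hDdef
  have hD1 : D ≤ r*p := Nat.min_le_left _ _
  have hD2 : D ≤ k - dlo := Nat.min_le_right _ _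
  have hdloD : dlo ≤ D := le_min (by omega) (by omega)
  obtain ⟨hXB, hBX, hcomp⟩ := card_facts X B
  set u := (X.1 ∩ B.1).card with hu
  have huk : u ≤ k := inter_card_le X B
  by_cases hcase0 : u = k
  · -- X = B
    have hXisB : X = B := vertex_eq_of_inter X B (by omega)
    subst hXisB
    exact ⟨SimpleGraph.Walk.nil, by simp only [SimpleGraph.Walk.length_nil]; omega⟩
  by_cases hcase1 : dlo ≤ k - u ∧ k - u ≤ D
  · -- direct edge
    refine ⟨SimpleGraph.Walk.cons (edge_of hk hr hp X B (k - u) (by omega) (by omega)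
      (by omega) (by omega)) SimpleGraph.Walk.nil,
      by simp only [SimpleGraph.Walk.length_cons, SimpleGraph.Walk.length_nil]; omega⟩
  by_cases hcase2 : k - u < dlo
  · -- small gap: dip
    obtain ⟨C, hC1, hC2⟩ := swap_lemma' hk X B (dlo - (k - u)) (k - u) 0 dlo
      (by omega) (by omega) (by omega) (by omega) (by omega)
    have e1 : (G2).Adj X C := edge_of hk hr hp X C dlo
      (by rw [Finset.inter_comm]; omega) (by omega) (by omega) (by omega)
    have e2 : (G2).Adj C B := edge_of hk hr hp C B dlo (by omega) (by omega)
      (by omega) (by omega)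
    exact ⟨SimpleGraph.Walk.cons e1 (SimpleGraph.Walk.cons e2 SimpleGraph.Walk.nil),
      by simp only [SimpleGraph.Walk.length_cons, SimpleGraph.Walk.length_nil]; omega⟩
  · -- big gap: D < k - u ≤ 2D
    push_neg at hcase1 hcase2
    have hgap : D < k - u := by
      rcases Nat.lt_or_ge D (k - u) with h' | h'
      · exact h'
      · exact absurd (hcase1 hcase2) (by omega)
    set π := (k - u) - D with hπ
    set d1 := max π dlo with hd1
    have hd1or : d1 = π ∨ d1 = dlo := max_choice _ _
    have hπd1 : π ≤ d1 := le_max_left _ _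
    have hdlod1 : dlo ≤ d1 := le_max_right _ _
    obtain ⟨C, hC1, hC2⟩ := swap_lemma' hk X B 0 d1 π (d1 - π)
      (by omega) (by omega) (by omega) (by omega) (by omega)
    have e1 : (G2).Adj X C := edge_of hk hr hp X C d1
      (by rw [Finset.inter_comm]; omega) (by omega) (by omega) (by omega)
    have e2 : (G2).Adj C B := edge_of hk hr hp C B D (by omega) (by omega)
      (by omega) (by omega)
    exact ⟨SimpleGraph.Walk.cons e1 (SimpleGraph.Walk.cons e2 SimpleGraph.Walk.nil),
      by simp only [SimpleGraph.Walk.length_cons, SimpleGraph.Walk.length_nil]; omega⟩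

lemma claimL (hr : 1 ≤ r) (hp : 1 ≤ p) (kbig : 2*r*(p-1)+2 ≤ k) (B : KV k r) :
    ∀ (L : ℕ) (X : KV k r),
    k ≤ (X.1 ∩ B.1).card + (L+2) * min (r*p) (k - (r*(p-1)+1)) →
    ∃ w : (G2).Walk X B, w.length ≤ L + 2 := by
  have hk : 1 ≤ k := by omega
  have hrel : r * p = r*(p-1) + r := by
    conv_lhs => rw [show p = (p-1)+1 by omega]
    rw [Nat.mul_succ]
  have hrr : 2*r*(p-1) = r*(p-1) + r*(p-1) := by ring
  set dlo := r*(p-1)+1 with hdlo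
  set D := min (r*p) (k - dlo) with hDdef
  have hD1 : D ≤ r*p := Nat.min_le_left _ _
  have hD2 : D ≤ k - dlo := Nat.min_le_right _ _
  have hdloD : dlo ≤ D := le_min (by omega) (by omega)
  intro L
  induction L with
  | zero =>
    intro X h
    rw [show (0+2) = 2 by rfl] at h
    exact claim2 hr hp kbig B X h
  | succ L ih =>
    intro X h
    obtain ⟨hXB, hBX, hcomp⟩ := card_facts X B
    set u := (X.1 ∩ B.1).card with hu
    have huk : u ≤ k := inter_card_le X B
    by_cases hcase : k ≤ u + (L+2)*D
    · obtain ⟨w, hw⟩ := ih X hcase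
      exact ⟨w, by omega⟩
    · push_neg at hcase
      have hring1 : (L+2)*D = (L+1)*D + D := by ring
      have hring2 : (L+1+2)*D = (L+2)*D + D := by ring
      obtain ⟨C, hC1, hC2⟩ := swap_lemma' hk X B 0 D D 0
        (by omega) (by omega) (by omega) (by omega) (by omega)
      have e1 : (G2).Adj X C := edge_of hk hr hp X C D
        (by rw [Finset.inter_comm]; omega) (by omega) (by omega) (by omega)
      obtain ⟨w, hw⟩ := ih C (by omega)
      exact ⟨SimpleGraph.Walk.cons e1 w, by
        rw [SimpleGraph.Walk.length_cons]; omega⟩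

end chain

end Stmt14Aux

theorem stmt14 (k r p s : ℕ) (hk : 2 ≤ k) (hr : 1 ≤ r) (hrk : r < k - 1) (hp : 1 ≤ p)
    (hD : 2 * p ≤ (kneserGraph (2 * k + r) k).diam)
    (A B : {A : Finset (Fin (2 * k + r)) // A.card = k}) (hAB : A ≠ B)
    (hnadj : ¬ (exactDistanceGraph (kneserGraph (2 * k + r) k) (2 * p)).Adj A B)
    (hs : (A.1 ∩ B.1).card = s) :
    (exactDistanceGraph (kneserGraph (2 * k + r) k) (2 * p)).dist A B
      = max 2 ((k - s) ⌈/⌉ (r * p)) := by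
  have hk1 : 1 ≤ k := by omega
  have kbig := Stmt14Aux.k_big (k := k) (r := r) hk1 hr hp hD
  have hrel : r * p = r*(p-1) + r := by
    conv_lhs => rw [show p = (p-1)+1 by omega]
    rw [Nat.mul_succ]
  have hrr : 2*r*(p-1) = r*(p-1) + r*(p-1) := by ring
  set dlo := r*(p-1)+1 with hdlo
  set D := min (r*p) (k - dlo) with hDdef
  have hD1 : D ≤ r*p := Nat.min_le_left _ _
  have hD2 : D ≤ k - dlo := Nat.min_le_right _ _
  have hdloD : dlo ≤ D := le_min (by omega) (by omega)
  have hsk : s ≤ k := hs ▸ Stmt14Aux.inter_card_le A B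
  set m := max 2 ((k - s) ⌈/⌉ (r * p)) with hm
  have hm2 : 2 ≤ m := le_max_left _ _
  have hrp : 0 < r*p := Nat.mul_pos (by omega) (by omega)
  -- upper bound
  have hgap : k ≤ s + m*D := by
    rcases Nat.le_total (r*p) (k - dlo) with hc | hc
    · have hDval : D = r*p := min_eq_left hc
      have h1 : k - s ≤ (r*p) * ((k - s) ⌈/⌉ (r*p)) := by
        have := le_smul_ceilDiv (b := k - s) hrp
        simpa [smul_eq_mul] using this
      have h2 : (r*p) * ((k-s) ⌈/⌉ (r*p)) ≤ (r*p) * m :=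
        Nat.mul_le_mul_left _ (le_max_right _ _)
      have h3 : m * D = (r*p) * m := by rw [hDval]; ring
      omega
    · have hDval : D = k - dlo := min_eq_right hc
      have h2 : 2*D ≤ m*D := Nat.mul_le_mul_right _ hm2
      omega
  obtain ⟨w, hw⟩ := Stmt14Aux.claimL hr hp kbig B (m - 2) A (by
    have hm' : m - 2 + 2 = m := by omega
    rw [hm', hs]
    exact hgap)
  have hub : (exactDistanceGraph (kneserGraph (2 * k + r) k) (2 * p)).dist A B ≤ m :=
    le_trans (SimpleGraph.dist_le w) (by omega)
  -- lower bound
  have hreach : (exactDistanceGraph (kneserGraph (2 * k + r) k) (2 * p)).Reachable A B := ⟨w⟩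
  obtain ⟨w', hw'⟩ := hreach.exists_walk_length_eq_dist
  have hd0 : 0 < (exactDistanceGraph (kneserGraph (2 * k + r) k) (2 * p)).dist A B :=
    hreach.pos_dist_of_ne hAB
  have hd1 : (exactDistanceGraph (kneserGraph (2 * k + r) k) (2 * p)).dist A B ≠ 1 := by
    intro h1
    exact hnadj (w'.adj_of_length_eq_one (by rw [hw', h1]))
  have hbound := Stmt14Aux.g2_walk_bound (k := k) (r := r) hp w'
  rw [hw', hs] at hbound
  have hceil : (k - s) ⌈/⌉ (r*p) ≤
      (exactDistanceGraph (kneserGraph (2 * k + r) k) (2 * p)).dist A B := by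
    rw [ceilDiv_le_iff_le_mul hrp]
    have hcomm : (exactDistanceGraph (kneserGraph (2 * k + r) k) (2 * p)).dist A B * (r*p)
        = r*p*((exactDistanceGraph (kneserGraph (2 * k + r) k) (2 * p)).dist A B) := by ring
    omega
  exact le_antisymm hub (max_le (by omega) hceil)
end

section
/- Let k ≥ 2, 1 ≤ r < k-1, p ≥ 1, with 2p+1 = diam(K(2k+r,k)) and r not dividing k-1. If A and B are k-subsets of [2k+r] that are not adjacent in K_{=2p+1}(2k+r,k), then their distance in K_{=2p+1}(2k+r,k) equals 2. -/
open Finset SimpleGraph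

variable {k r : ℕ}

-- key card facts
lemma card_facts {X Z Y : Finset (Fin (2*k+r))} (hX : X.card = k) (hZ : Z.card = k)
    (hY : Y.card = k) (hd : Disjoint X Z) :
    (X ∩ Y).card + (Z ∩ Y).card ≤ k ∧ k ≤ (X ∩ Y).card + (Z ∩ Y).card + r := by
  constructor
  · have hdis : Disjoint (X ∩ Y) (Z ∩ Y) := hd.mono inter_subset_left inter_subset_left
    calc (X ∩ Y).card + (Z ∩ Y).card = ((X ∩ Y) ∪ (Z ∩ Y)).card :=
          (card_union_of_disjoint hdis).symm
      _ ≤ Y.card := card_le_card (by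
          intro a ha; rcases mem_union.mp ha with h | h
          · exact (mem_inter.mp h).2
          · exact (mem_inter.mp h).2)
      _ = k := hY
  · have h1 : (Y ∩ (X ∪ Z)).card + (Y \ (X ∪ Z)).card = Y.card :=
      card_inter_add_card_sdiff Y (X ∪ Z)
    have h2 : Y ∩ (X ∪ Z) = (Y ∩ X) ∪ (Y ∩ Z) := inter_union_distrib_left _ _ _
    have h3 : (Y ∩ (X ∪ Z)).card ≤ (Y ∩ X).card + (Y ∩ Z).card := by
      rw [h2]; exact card_union_le _ _
    have h4 : (Y \ (X ∪ Z)).card ≤ r := by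
      have hsub : Y \ (X ∪ Z) ⊆ (X ∪ Z)ᶜ := by
        intro a ha; simp only [mem_compl]; exact (mem_sdiff.mp ha).2
      have hc : ((X ∪ Z)ᶜ).card = r := by
        rw [card_compl, card_union_of_disjoint hd, hX, hZ]
        simp; omega
      calc (Y \ (X ∪ Z)).card ≤ ((X ∪ Z)ᶜ).card := card_le_card hsub
        _ = r := hc
    rw [inter_comm Y X] at h3; rw [inter_comm Y Z] at h3
    omega

lemma walk_inv {X Y : {A : Finset (Fin (2*k+r)) // A.card = k}}
    (W : (kneserGraph (2*k+r) k).Walk X Y) :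
    ∀ m, (W.length = 2*m → k ≤ (X.1 ∩ Y.1).card + m*r) ∧
         (W.length = 2*m+1 → (X.1 ∩ Y.1).card ≤ m*r) := by
  induction W with
  | @nil u =>
    intro m
    refine ⟨fun _ => ?_, fun h => ?_⟩
    · rw [inter_self, u.2]; omega
    · simp [SimpleGraph.Walk.length_nil] at h
  | @cons u v w h q ih =>
    intro m
    have hlen : (SimpleGraph.Walk.cons h q).length = q.length + 1 :=
      SimpleGraph.Walk.length_cons _ _
    have hcf := card_facts (k := k) (r := r) u.2 v.2 w.2 h.2
    refine ⟨fun he => ?_, fun ho => ?_⟩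
    · -- length = 2m, so q.length = 2(m-1)+1, m ≥ 1
      have hm : 1 ≤ m := by omega
      have hq : q.length = 2*(m-1)+1 := by omega
      have := (ih (m-1)).2 hq
      have : k ≤ (u.1 ∩ w.1).card + m * r := by
        have hmr : (m-1)*r + r = m*r := by
          have : m - 1 + 1 = m := by omega
          calc (m-1)*r + r = ((m-1)+1)*r := by ring
            _ = m*r := by rw [this]
        omega
      exact this
    · have hq : q.length = 2*m := by omega
      have := (ih m).1 hq
      omega


lemma exists_disjoint_vertex (hk : 1 ≤ k) (S : Finset (Fin (2*k+r))) (hS : S.card ≤ k + r) :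
    ∃ Z : {A : Finset (Fin (2*k+r)) // A.card = k}, Disjoint Z.1 S := by
  have hc : k ≤ Sᶜ.card := by
    rw [card_compl]
    simp only [Fintype.card_fin]
    omega
  obtain ⟨Z, hZsub, hZcard⟩ := Finset.exists_subset_card_eq hc
  exact ⟨⟨Z, hZcard⟩, disjoint_left.mpr fun a ha => by
    have := hZsub ha; simp only [mem_compl] at this; exact this⟩

lemma ne_of_disjoint (hk : 1 ≤ k) {X Z : {A : Finset (Fin (2*k+r)) // A.card = k}}
    (hd : Disjoint X.1 Z.1) : X ≠ Z := by
  intro h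
  subst h
  have he : X.1 = ∅ := disjoint_self.mp hd
  have h2 := X.2
  rw [he] at h2
  simp at h2
  omega

lemma swap_inter (X D E Y : Finset (Fin (2*k+r))) :
    ((X \ D) ∪ E) ∩ Y = ((X ∩ Y) \ D) ∪ (E ∩ Y) := by
  ext a
  simp only [mem_inter, mem_union, mem_sdiff]
  tauto

lemma swap_card {X D E : Finset (Fin (2*k+r))} (hD : D ⊆ X) (hE : Disjoint E X)
    (hcard : E.card = D.card) (hX : X.card = k) : ((X \ D) ∪ E).card = k := by
  have hd : Disjoint (X \ D) E := (hE.mono_right sdiff_subset).symm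
  rw [card_union_of_disjoint hd, card_sdiff_of_subset hD]
  have := card_le_card hD
  omega

/-- two-step reach: if `|X ∪ X'| ≤ k + r` there is a walk of length 2 from X to X'. -/
lemma two_step (hk : 1 ≤ k) (X X' : {A : Finset (Fin (2*k+r)) // A.card = k})
    (hU : (X.1 ∪ X'.1).card ≤ k + r) :
    ∃ W : (kneserGraph (2*k+r) k).Walk X X', W.length = 2 := by
  obtain ⟨Z, hZ⟩ := exists_disjoint_vertex hk (X.1 ∪ X'.1) hU
  have hZX : Disjoint Z.1 X.1 := hZ.mono_right subset_union_left
  have hZX' : Disjoint Z.1 X'.1 := hZ.mono_right subset_union_right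
  have h1 : (kneserGraph (2*k+r) k).Adj X Z := ⟨(ne_of_disjoint hk hZX).symm, hZX.symm⟩
  have h2 : (kneserGraph (2*k+r) k).Adj Z X' := ⟨ne_of_disjoint hk hZX', hZX'⟩
  exact ⟨Walk.cons h1 (Walk.cons h2 Walk.nil), rfl⟩

lemma card_sdiff' {X Y : Finset (Fin (2*k+r))} (hX : X.card = k) :
    (X \ Y).card = k - (X ∩ Y).card := by
  have := card_inter_add_card_sdiff X Y
  omega

lemma card_compl_union {X Y : Finset (Fin (2*k+r))} (hX : X.card = k) (hY : Y.card = k) :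
    ((X ∪ Y)ᶜ).card = r + (X ∩ Y).card := by
  have h1 := card_union_add_card_inter X Y
  have h2 : (X ∩ Y).card ≤ k := le_trans (card_le_card inter_subset_left) (le_of_eq hX)
  rw [card_compl]
  simp only [Fintype.card_fin]
  omega

lemma odd_walk (hk : 1 ≤ k) (hr : 1 ≤ r) :
    ∀ m, ∀ (X Y : {A : Finset (Fin (2*k+r)) // A.card = k}), X ≠ Y →
    (X.1 ∩ Y.1).card ≤ m*r →
    ∃ W : (kneserGraph (2*k+r) k).Walk X Y, W.length = 2*m+1 := by
  intro m
  induction m with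
  | zero =>
    intro X Y hne hs
    simp only [Nat.zero_mul, Nat.le_zero] at hs
    have hd : Disjoint X.1 Y.1 := by
      exact disjoint_iff_inter_eq_empty.mpr (card_eq_zero.mp hs)
    exact ⟨Walk.cons ⟨hne, hd⟩ Walk.nil, rfl⟩
  | succ m ih =>
    intro X Y hne hs
    set s := (X.1 ∩ Y.1).card with hs_def
    have hsk : s ≤ k := le_trans (card_le_card inter_subset_left) (le_of_eq X.2)
    set c := min r s with hc_def
    have hcr : c ≤ r := min_le_left _ _
    have hcs : c ≤ s := min_le_right _ _
    have hcor : c = r ∨ c = s := min_choice _ _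
    obtain ⟨D, hDsub, hDcard⟩ := Finset.exists_subset_card_eq (show c ≤ (X.1 ∩ Y.1).card from hcs)
    have hcompl : c ≤ ((X.1 ∪ Y.1)ᶜ).card := by
      rw [card_compl_union X.2 Y.2]; omega
    obtain ⟨E, hEsub, hEcard⟩ := Finset.exists_subset_card_eq hcompl
    have hEX : Disjoint E X.1 := disjoint_left.mpr fun a ha hx => by
      have := hEsub ha; rw [mem_compl] at this; exact this (mem_union_left _ hx)
    have hEY : Disjoint E Y.1 := disjoint_left.mpr fun a ha hy => by
      have := hEsub ha; rw [mem_compl] at this; exact this (mem_union_right _ hy)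
    have hDX : D ⊆ X.1 := hDsub.trans inter_subset_left
    set X' : {A : Finset (Fin (2*k+r)) // A.card = k} :=
      ⟨(X.1 \ D) ∪ E, swap_card hDX hEX (by omega) X.2⟩ with hX'_def
    have hinter : (X'.1 ∩ Y.1).card = s - c := by
      show (((X.1 \ D) ∪ E) ∩ Y.1).card = s - c
      rw [swap_inter]
      have hEYempty : E ∩ Y.1 = ∅ := disjoint_iff_inter_eq_empty.mp hEY
      rw [hEYempty, union_empty, card_sdiff_of_subset hDsub, hDcard]
    have hmul : (m+1)*r = m*r + r := by ring
    -- apply IH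
    have hX'Y : X' ≠ Y := by
      intro h
      have : (X'.1 ∩ Y.1).card = k := by rw [h, inter_self, Y.2]
      omega
    obtain ⟨W1, hW1⟩ := ih X' Y hX'Y (by omega)
    -- two-step from X to X'
    have hU : (X.1 ∪ X'.1).card ≤ k + r := by
      have hsub : X.1 ∪ X'.1 ⊆ X.1 ∪ E := by
        intro a ha
        rcases mem_union.mp ha with h | h
        · exact mem_union_left _ h
        · rcases mem_union.mp h with h' | h'
          · exact mem_union_left _ (mem_sdiff.mp h').1
          · exact mem_union_right _ h'
      calc (X.1 ∪ X'.1).card ≤ (X.1 ∪ E).card := card_le_card hsub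
        _ ≤ X.1.card + E.card := card_union_le _ _
        _ ≤ k + r := by rw [X.2]; omega
    obtain ⟨W2, hW2⟩ := two_step hk X X' hU
    exact ⟨W2.append W1, by rw [Walk.length_append]; omega⟩

lemma even_walk (hk : 1 ≤ k) (hr : 1 ≤ r) :
    ∀ m, ∀ (X Y : {A : Finset (Fin (2*k+r)) // A.card = k}),
    k ≤ (X.1 ∩ Y.1).card + m*r →
    ∃ W : (kneserGraph (2*k+r) k).Walk X Y, W.length = 2*m := by
  intro m
  induction m with
  | zero =>
    intro X Y hs
    simp only [Nat.zero_mul, Nat.add_zero] at hs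
    have hsk : (X.1 ∩ Y.1).card ≤ k := le_trans (card_le_card inter_subset_left) (le_of_eq X.2)
    have hXY : X.1 = Y.1 := by
      have h1 : X.1 ∩ Y.1 = X.1 :=
        eq_of_subset_of_card_le inter_subset_left (by omega)
      have h2 : X.1 ⊆ Y.1 := inter_eq_left.mp h1
      exact eq_of_subset_of_card_le h2 (by rw [X.2, Y.2])
    have : X = Y := Subtype.ext hXY
    exact ⟨this ▸ Walk.nil, by subst this; rfl⟩
  | succ m ih =>
    intro X Y hs
    set s := (X.1 ∩ Y.1).card with hs_def
    have hsk : s ≤ k := le_trans (card_le_card inter_subset_left) (le_of_eq X.2)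
    set c := min r (k - s) with hc_def
    have hcr : c ≤ r := min_le_left _ _
    have hcs : c ≤ k - s := min_le_right _ _
    have hcor : c = r ∨ c = k - s := min_choice _ _
    have hXYcard : (X.1 \ Y.1).card = k - s := card_sdiff' X.2
    have hYXcard : (Y.1 \ X.1).card = k - s := by
      rw [card_sdiff' Y.2, inter_comm]
    obtain ⟨D, hDsub, hDcard⟩ := Finset.exists_subset_card_eq (show c ≤ (X.1 \ Y.1).card from by omega)
    obtain ⟨E, hEsub, hEcard⟩ := Finset.exists_subset_card_eq (show c ≤ (Y.1 \ X.1).card from by omega)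
    have hEX : Disjoint E X.1 := disjoint_left.mpr fun a ha hx =>
      (mem_sdiff.mp (hEsub ha)).2 hx
    have hDX : D ⊆ X.1 := hDsub.trans sdiff_subset
    set X' : {A : Finset (Fin (2*k+r)) // A.card = k} :=
      ⟨(X.1 \ D) ∪ E, swap_card hDX hEX (by omega) X.2⟩ with hX'_def
    have hinter : (X'.1 ∩ Y.1).card = s + c := by
      show (((X.1 \ D) ∪ E) ∩ Y.1).card = s + c
      rw [swap_inter]
      have h1 : (X.1 ∩ Y.1) \ D = X.1 ∩ Y.1 := by
        apply sdiff_eq_self_of_disjoint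
        exact disjoint_left.mpr fun a ha hD => (mem_sdiff.mp (hDsub hD)).2 (mem_inter.mp ha).2
      have h2 : E ∩ Y.1 = E := inter_eq_left.mpr (hEsub.trans sdiff_subset)
      rw [h1, h2, card_union_of_disjoint, hEcard]
      exact (hEX.mono_right inter_subset_left).symm
    have hmul : (m+1)*r = m*r + r := by ring
    obtain ⟨W1, hW1⟩ := ih X' Y (by omega)
    have hU : (X.1 ∪ X'.1).card ≤ k + r := by
      have hsub : X.1 ∪ X'.1 ⊆ X.1 ∪ E := by
        intro a ha
        rcases mem_union.mp ha with h | h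
        · exact mem_union_left _ h
        · rcases mem_union.mp h with h' | h'
          · exact mem_union_left _ (mem_sdiff.mp h').1
          · exact mem_union_right _ h'
      calc (X.1 ∪ X'.1).card ≤ (X.1 ∪ E).card := card_le_card hsub
        _ ≤ X.1.card + E.card := card_union_le _ _
        _ ≤ k + r := by rw [X.2]; omega
    obtain ⟨W2, hW2⟩ := two_step hk X X' hU
    exact ⟨W2.append W1, by rw [Walk.length_append]; omega⟩

lemma adj_in_range (hk : 1 ≤ k) (hr : 1 ≤ r) {p : ℕ}
    (hediam : (kneserGraph (2*k+r) k).ediam ≠ ⊤)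
    (hdiam : (kneserGraph (2*k+r) k).diam = 2*p+1)
    (X Y : {A : Finset (Fin (2*k+r)) // A.card = k})
    (h1 : r*p + 1 ≤ (X.1 ∩ Y.1).card + r) (h2 : (X.1 ∩ Y.1).card + r*p + 1 ≤ k) :
    (exactDistanceGraph (kneserGraph (2*k+r) k) (2*p+1)).Adj X Y := by
  set s := (X.1 ∩ Y.1).card with hs
  have hne : X ≠ Y := by
    intro h
    have : s = k := by rw [hs, h, inter_self, Y.2]
    omega
  have hreach : (kneserGraph (2*k+r) k).Reachable X Y := by
    apply reachable_of_edist_ne_top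
    intro h
    exact hediam (eq_top_iff.mpr (h ▸ edist_le_ediam))
  obtain ⟨W, hW⟩ := hreach.exists_walk_length_eq_dist
  have hdle : (kneserGraph (2*k+r) k).dist X Y ≤ 2*p+1 := hdiam ▸ dist_le_diam hediam
  have hinv := walk_inv W
  rcases Nat.even_or_odd ((kneserGraph (2*k+r) k).dist X Y) with ⟨m, hm⟩ | ⟨m, hm⟩
  · exfalso
    have hk2 := (hinv m).1 (by omega)
    have hpm : p < m := by
      by_contra hc
      push_neg at hc
      have h3 : m*r ≤ p*r := Nat.mul_le_mul_right r hc
      have h4 : p*r = r*p := Nat.mul_comm _ _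
      omega
    omega
  · have hk2 := (hinv m).2 (by omega)
    have hpm : p ≤ m := by
      by_contra hc
      push_neg at hc
      have h3 : (m+1)*r ≤ p*r := Nat.mul_le_mul_right r hc
      have h4 : p*r = r*p := Nat.mul_comm _ _
      have h5 : (m+1)*r = m*r + r := by ring
      omega
    exact ⟨hne, by omega⟩

lemma k_bound {p : ℕ} (hk : 1 ≤ k) (hr : 1 ≤ r) (hp : 1 ≤ p)
    (hediam : (kneserGraph (2*k+r) k).ediam ≠ ⊤)
    (hdiam : (kneserGraph (2*k+r) k).diam = 2*p+1) :
    2*(r*p) + 2 ≤ k + r := by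
  have hne : Nonempty {A : Finset (Fin (2*k+r)) // A.card = k} := by
    have hc : k ≤ (Finset.univ : Finset (Fin (2*k+r))).card := by
      rw [card_univ]; simp only [Fintype.card_fin]; omega
    obtain ⟨Z, _, hZ⟩ := Finset.exists_subset_card_eq hc
    exact ⟨⟨Z, hZ⟩⟩
  obtain ⟨X, Y, hXY⟩ := exists_dist_eq_diam (G := kneserGraph (2*k+r) k)
  rw [hdiam] at hXY
  have hXYne : X ≠ Y := by
    intro h; rw [h, dist_self] at hXY; omega
  set s := (X.1 ∩ Y.1).card with hs
  have ha : s + p*r < k := by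
    by_contra hc
    push_neg at hc
    obtain ⟨W, hW⟩ := even_walk hk hr p X Y (by omega)
    have := dist_le W
    omega
  have hb : (p-1)*r < s := by
    by_contra hc
    push_neg at hc
    obtain ⟨W, hW⟩ := odd_walk hk hr (p-1) X Y hXYne hc
    have := dist_le W
    omega
  have h4 : p*r = r*p := Nat.mul_comm _ _
  have h5 : (p-1)*r + r = p*r := by
    have : p - 1 + 1 = p := by omega
    calc (p-1)*r + r = ((p-1)+1)*r := by ring
      _ = p*r := by rw [this]
  omega

lemma build (A B : Finset (Fin (2*k+r))) (x y z w : ℕ)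
    (hx : x ≤ (A ∩ B).card) (hy : y ≤ (A \ B).card) (hz : z ≤ (B \ A).card)
    (hw : w ≤ ((A ∪ B)ᶜ).card) :
    ∃ C : Finset (Fin (2*k+r)), C.card = x+y+z+w ∧ (C ∩ A).card = x+y ∧ (C ∩ B).card = x+z := by
  obtain ⟨S1, hS1sub, hS1⟩ := Finset.exists_subset_card_eq hx
  obtain ⟨S2, hS2sub, hS2⟩ := Finset.exists_subset_card_eq hy
  obtain ⟨S3, hS3sub, hS3⟩ := Finset.exists_subset_card_eq hz
  obtain ⟨S4, hS4sub, hS4⟩ := Finset.exists_subset_card_eq hw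
  have m1 : ∀ a ∈ S1, a ∈ A ∧ a ∈ B := fun a ha => mem_inter.mp (hS1sub ha)
  have m2 : ∀ a ∈ S2, a ∈ A ∧ a ∉ B := fun a ha => mem_sdiff.mp (hS2sub ha)
  have m3 : ∀ a ∈ S3, a ∈ B ∧ a ∉ A := fun a ha => mem_sdiff.mp (hS3sub ha)
  have m4 : ∀ a ∈ S4, a ∉ A ∧ a ∉ B := fun a ha => by
    have := mem_compl.mp (hS4sub ha)
    rw [mem_union] at this
    tauto
  refine ⟨((S1 ∪ S2) ∪ S3) ∪ S4, ?_, ?_, ?_⟩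
  · have d12 : Disjoint S1 S2 := disjoint_left.mpr fun a h1 h2 => (m2 a h2).2 (m1 a h1).2
    have d13 : Disjoint (S1 ∪ S2) S3 := disjoint_left.mpr fun a h1 h3 => by
      rcases mem_union.mp h1 with h | h
      · exact (m3 a h3).2 (m1 a h).1
      · exact (m3 a h3).2 (m2 a h).1
    have d14 : Disjoint ((S1 ∪ S2) ∪ S3) S4 := disjoint_left.mpr fun a h1 h4 => by
      rcases mem_union.mp h1 with h | h
      · rcases mem_union.mp h with h' | h'
        · exact (m4 a h4).1 (m1 a h').1
        · exact (m4 a h4).1 (m2 a h').1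
      · exact (m4 a h4).2 (m3 a h).1
    rw [card_union_of_disjoint d14, card_union_of_disjoint d13, card_union_of_disjoint d12,
      hS1, hS2, hS3, hS4]
  · have he : (((S1 ∪ S2) ∪ S3) ∪ S4) ∩ A = S1 ∪ S2 := by
      ext a
      simp only [mem_inter, mem_union]
      constructor
      · rintro ⟨(((h|h)|h)|h), hA⟩
        · exact Or.inl h
        · exact Or.inr h
        · exact absurd hA (m3 a h).2
        · exact absurd hA (m4 a h).1
      · rintro (h|h)
        · exact ⟨Or.inl (Or.inl (Or.inl h)), (m1 a h).1⟩
        · exact ⟨Or.inl (Or.inl (Or.inr h)), (m2 a h).1⟩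
    rw [he, card_union_of_disjoint
      (disjoint_left.mpr fun a h1 h2 => (m2 a h2).2 (m1 a h1).2), hS1, hS2]
  · have he : (((S1 ∪ S2) ∪ S3) ∪ S4) ∩ B = S1 ∪ S3 := by
      ext a
      simp only [mem_inter, mem_union]
      constructor
      · rintro ⟨(((h|h)|h)|h), hB⟩
        · exact Or.inl h
        · exact absurd hB (m2 a h).2
        · exact Or.inr h
        · exact absurd hB (m4 a h).2
      · rintro (h|h)
        · exact ⟨Or.inl (Or.inl (Or.inl h)), (m1 a h).2⟩
        · exact ⟨Or.inl (Or.inr h), (m3 a h).1⟩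
    rw [he, card_union_of_disjoint
      (disjoint_left.mpr fun a h1 h3 => (m3 a h3).2 (m1 a h1).1), hS1, hS3]

theorem stmt15 (k r p : ℕ) (hk : 2 ≤ k) (hr : 1 ≤ r) (hrk : r < k - 1) (hp : 1 ≤ p)
    (hdiam : 2 * p + 1 = (kneserGraph (2 * k + r) k).diam) (hnd : ¬ r ∣ (k - 1))
    (A B : {A : Finset (Fin (2 * k + r)) // A.card = k}) (hAB : A ≠ B)
    (hnadj : ¬ (exactDistanceGraph (kneserGraph (2 * k + r) k) (2 * p + 1)).Adj A B) :
    (exactDistanceGraph (kneserGraph (2 * k + r) k) (2 * p + 1)).dist A B = 2 := by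
  have hk1 : 1 ≤ k := by omega
  have hediam : (kneserGraph (2*k+r) k).ediam ≠ ⊤ := by
    intro h
    have h0 : (kneserGraph (2*k+r) k).diam = 0 := by
      rw [SimpleGraph.diam, h]; rfl
    omega
  have hdiam' : (kneserGraph (2*k+r) k).diam = 2*p+1 := hdiam.symm
  have hkb := k_bound hk1 hr hp hediam hdiam'
  have hrp : r ≤ r*p := Nat.le_mul_of_pos_right r hp
  set s := (A.1 ∩ B.1).card with hs_def
  have hsle : s ≤ k := le_trans (card_le_card inter_subset_left) (le_of_eq A.2)
  have hsk : s < k := by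
    rcases Nat.lt_or_ge s k with h | h
    · exact h
    · exfalso
      have hseq : s = k := by omega
      have h1 : A.1 ∩ B.1 = A.1 :=
        eq_of_subset_of_card_le inter_subset_left (by rw [A.2, ← hs_def]; omega)
      have h2 : A.1 ⊆ B.1 := inter_eq_left.mp h1
      exact hAB (Subtype.ext (eq_of_subset_of_card_le h2 (by rw [A.2, B.2])))
  have hcase : s + r ≤ r*p ∨ k ≤ s + r*p := by
    by_contra hc
    push_neg at hc
    exact hnadj (adj_in_range hk1 hr hediam hdiam' A B (by omega) (by omega))
  have hABd : (A.1 \ B.1).card = k - s := card_sdiff' A.2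
  have hBAd : (B.1 \ A.1).card = k - s := by rw [card_sdiff' B.2, inter_comm]
  have hcompl : ((A.1 ∪ B.1)ᶜ).card = r + s := card_compl_union A.2 B.2
  have hparam : ∃ x y z w t : ℕ, x + y = t ∧ x + z = t ∧ x ≤ s ∧ y ≤ k - s ∧ z ≤ k - s ∧
      w ≤ r + s ∧ x+y+z+w = k ∧ r*p + 1 ≤ t + r ∧ t + r*p + 1 ≤ k := by
    rcases hcase with hc | hc
    · refine ⟨0, max (r*p+1-r) ((k-r-s+1)/2), max (r*p+1-r) ((k-r-s+1)/2),
        k - 2*(max (r*p+1-r) ((k-r-s+1)/2)), max (r*p+1-r) ((k-r-s+1)/2),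
        ?_, ?_, ?_, ?_, ?_, ?_, ?_, ?_, ?_⟩ <;> omega
    · refine ⟨s - (r*p+1), (k - (r*p+1)) - (s - (r*p+1)), (k - (r*p+1)) - (s - (r*p+1)),
        k - ((s - (r*p+1)) + 2*((k - (r*p+1)) - (s - (r*p+1)))), k - (r*p+1),
        ?_, ?_, ?_, ?_, ?_, ?_, ?_, ?_, ?_⟩ <;> omega
  obtain ⟨x, y, z, w, t, hxy, hxz, hx, hy, hz, hw, hsum, ht1, ht2⟩ := hparam
  obtain ⟨C, hCcard, hCA, hCB⟩ := build A.1 B.1 x y z w (by omega) (by omega) (by omega) (by omega)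
  set Cv : {A : Finset (Fin (2*k+r)) // A.card = k} := ⟨C, by omega⟩ with hCv_def
  have hadjAC : (exactDistanceGraph (kneserGraph (2*k+r) k) (2*p+1)).Adj A Cv := by
    apply adj_in_range hk1 hr hediam hdiam' A Cv
    · rw [inter_comm]; show r*p+1 ≤ (C ∩ A.1).card + r; omega
    · rw [inter_comm]; show (C ∩ A.1).card + (r*p+1) ≤ k; omega
  have hadjCB : (exactDistanceGraph (kneserGraph (2*k+r) k) (2*p+1)).Adj Cv B := by
    apply adj_in_range hk1 hr hediam hdiam' Cv B
    · show r*p+1 ≤ (C ∩ B.1).card + r; omega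
    · show (C ∩ B.1).card + (r*p+1) ≤ k; omega
  have hdle : (exactDistanceGraph (kneserGraph (2*k+r) k) (2*p+1)).dist A B ≤ 2 := by
    have := dist_le (Walk.cons hadjAC (Walk.cons hadjCB Walk.nil))
    simpa using this
  have hd1 : (exactDistanceGraph (kneserGraph (2*k+r) k) (2*p+1)).dist A B ≠ 1 := by
    intro h
    exact hnadj (dist_eq_one_iff_adj.mp h)
  have hd0 : (exactDistanceGraph (kneserGraph (2*k+r) k) (2*p+1)).dist A B ≠ 0 := by
    intro h
    rcases dist_eq_zero_iff_eq_or_not_reachable.mp h with h' | h'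
    · exact hAB h'
    · exact h' ⟨Walk.cons hadjAC (Walk.cons hadjCB Walk.nil)⟩
  omega
end
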